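/- arXiv:0804.3888 — 5 statements merged into one kernel-verified Lean document; each statement's English description precedes it below -/
import Mathlib

section
/- Let a = (a_0, a_1, ...) and b = (b_0, b_1, ...) be p-adic Witt vectors over a commutative ring A such that for every n at least one of a_n, b_n is zero. Then a +_W b = (a_0 + b_0, a_1 + b_1, a_2 + b_2, ...), i.e., the Witt vector sum of 'disjoint' Witt vectors is computed coordinatewise. -/
open WittVector MvPolynomial Function

/-- Key universal lemma over a ℚ-algebra polynomial-like ring where ghost map is injective:
actually stated for any ring with injective ghost map replaced by direct computation over
`MvPolynomial ℕ ℚ`. -/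
private theorem stmt6_aux (p : ℕ) [Fact p.Prime] {R : Type} [CommRing R]
    [Invertible (p : R)] (x y : WittVector p R)
    (h : ∀ n : ℕ, x.coeff n = 0 ∨ y.coeff n = 0) :
    x + y = WittVector.mk p (fun n => x.coeff n + y.coeff n) := by
  apply (WittVector.ghostMap.bijective_of_invertible p R).1
  funext n
  simp only [WittVector.ghostMap_apply, map_add, WittVector.ghostComponent_apply,
    aeval_wittPolynomial, WittVector.coeff_mk]
  rw [← Finset.sum_add_distrib]
  apply Finset.sum_congr rfl
  intro i _
  have hp : 0 < p ^ (n - i) := pow_pos (Fact.out (p := p.Prime)).pos _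
  rcases h i with h0 | h0 <;>
    simp [h0, zero_pow hp.ne', mul_add]

private theorem stmt6_univ (p : ℕ) [Fact p.Prime] (x y : WittVector p (MvPolynomial ℕ ℤ))
    (h : ∀ n : ℕ, x.coeff n = 0 ∨ y.coeff n = 0) :
    x + y = WittVector.mk p (fun n => x.coeff n + y.coeff n) := by
  have hprime : p.Prime := Fact.out
  haveI : Invertible (p : ℚ) :=
    invertibleOfNonzero (by exact_mod_cast hprime.ne_zero)
  haveI : Invertible (p : MvPolynomial ℕ ℚ) := by
    have := Invertible.map (algebraMap ℚ (MvPolynomial ℕ ℚ)) (p : ℚ)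
    simpa using this
  set ι : MvPolynomial ℕ ℤ →+* MvPolynomial ℕ ℚ :=
    (MvPolynomial.map (Int.castRingHom ℚ))
  have hι : Injective ι := MvPolynomial.map_injective _ Int.cast_injective
  apply WittVector.map_injective ι hι
  rw [map_add]
  have := stmt6_aux p (WittVector.map ι x) (WittVector.map ι y)
    (by intro n; rcases h n with h0 | h0 <;> [left; right] <;>
        simp [WittVector.map_coeff, h0])
  rw [this]
  apply WittVector.ext
  intro n
  simp [WittVector.map_coeff, WittVector.coeff_mk]

/-- Adding "disjoint" `p`-adic Witt vectors: if for every `n` at least one of `a_n`, `b_n`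
is zero, then the Witt sum is computed coordinatewise. -/
theorem stmt6 (p : ℕ) [Fact p.Prime] (A : Type) [CommRing A] (a b : WittVector p A)
    (h : ∀ n : ℕ, a.coeff n = 0 ∨ b.coeff n = 0) :
    ∀ n : ℕ, (a + b).coeff n = a.coeff n + b.coeff n := by
  classical
  -- universal lifts
  set x : WittVector p (MvPolynomial ℕ ℤ) :=
    WittVector.mk p (fun n => if a.coeff n = 0 then 0 else MvPolynomial.X n)
  set y : WittVector p (MvPolynomial ℕ ℤ) :=
    WittVector.mk p (fun n => if a.coeff n = 0 then MvPolynomial.X n else 0)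
  set φ : MvPolynomial ℕ ℤ →+* A :=
    (MvPolynomial.aeval (fun n => a.coeff n + b.coeff n)).toRingHom
  have hx : WittVector.map φ x = a := by
    apply WittVector.ext; intro n
    simp only [WittVector.map_coeff, WittVector.coeff_mk, x]
    split_ifs with h0
    · simp [h0]
    · rcases h n with h1 | h1
      · exact absurd h1 h0
      · simp [φ, h1]
  have hy : WittVector.map φ y = b := by
    apply WittVector.ext; intro n
    simp only [WittVector.map_coeff, WittVector.coeff_mk, y]
    split_ifs with h0
    · simp [φ, h0]
    · rcases h n with h1 | h1
      · exact absurd h1 h0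
      · simp [h1]
  have key := stmt6_univ p x y (by
    intro n
    by_cases h0 : a.coeff n = 0
    · left; simp [x, WittVector.coeff_mk, h0]
    · right; simp [y, WittVector.coeff_mk, h0])
  intro n
  have := congrArg (fun z => (WittVector.map φ z).coeff n) key
  simp only [map_add, hx, hy] at this
  rw [this]
  simp [WittVector.map_coeff, WittVector.coeff_mk, ← hx, ← hy]
end

section
/- Let k be a perfect field of characteristic p. Define v: W_p(k) → ℕ ∪ {∞} by v(0) = ∞ and v(x_0, x_1, ...) = n iff x_n is the first nonzero coordinate. Then v is a valuation making W_p(k) a complete discrete valuation ring of characteristic zero with maximal ideal generated by p and residue field k. -/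
noncomputable section

open WittVector Function

variable {p : ℕ} [hp : Fact p.Prime] {k : Type} [Field k] [CharP k p]

private lemma aux_iter_v_coeff_lt (x : WittVector p k) :
    ∀ n, ∀ l < n, (verschiebung^[n] x).coeff l = 0 := by
  intro n
  induction n with
  | zero => intro l hl; omega
  | succ n ih =>
    intro l hl
    rw [Function.iterate_succ_apply']
    match l with
    | 0 => exact verschiebung_coeff_zero _
    | l + 1 => rw [verschiebung_coeff_succ]; exact ih l (by omega)

private lemma aux_iter_vf (y : WittVector p k) (n : ℕ) :
    verschiebung^[n] (frobenius^[n] y) = y * (p : WittVector p k) ^ n := by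
  induction n generalizing y with
  | zero => simp
  | succ n ih =>
    rw [Function.iterate_succ_apply' verschiebung, Function.iterate_succ_apply frobenius]
    have hpn : (p : WittVector p k) ^ n = frobenius ((p : WittVector p k) ^ n) := by
      rw [map_pow, map_natCast]
    calc verschiebung (verschiebung^[n] (frobenius^[n] (frobenius y)))
        = verschiebung (frobenius y * (p : WittVector p k) ^ n) := by rw [ih]
      _ = verschiebung (frobenius y * frobenius ((p : WittVector p k) ^ n)) := by rw [← hpn]
      _ = verschiebung (frobenius y) * (p : WittVector p k) ^ n :=
          verschiebung_mul_frobenius _ _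
      _ = y * (p : WittVector p k) * (p : WittVector p k) ^ n := by
          rw [verschiebung_frobenius]
      _ = y * (p : WittVector p k) ^ (n + 1) := by ring

private lemma aux_dvd_iff [PerfectRing k p] (x : WittVector p k) (n : ℕ) :
    (p : WittVector p k) ^ n ∣ x ↔ ∀ i < n, x.coeff i = 0 := by
  constructor
  · rintro ⟨y, rfl⟩ i hi
    rw [mul_comm, ← aux_iter_vf]
    exact aux_iter_v_coeff_lt _ n i hi
  · intro h
    obtain ⟨y, hy⟩ := (frobenius_bijective p k).surjective.iterate n (x.shift n)
    refine ⟨y, ?_⟩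
    rw [mul_comm, ← aux_iter_vf, hy]
    exact eq_iterate_verschiebung h

private lemma aux_sub_dvd_iff [PerfectRing k p] (a b : WittVector p k) (n : ℕ) :
    (p : WittVector p k) ^ n ∣ a - b ↔ ∀ i < n, a.coeff i = b.coeff i := by
  rw [aux_dvd_iff]
  have key : (∀ i < n, (a - b).coeff i = 0) ↔
      WittVector.truncate n a = WittVector.truncate n b := by
    constructor
    · intro h
      rw [← sub_eq_zero, ← map_sub]
      ext ⟨j, hj⟩
      rw [WittVector.coeff_truncate, h j hj, TruncatedWittVector.coeff_zero]
    · intro h i hi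
      have h3 : WittVector.truncate n (a - b) = 0 := by rw [map_sub, h, sub_self]
      have := congrArg (TruncatedWittVector.coeff ⟨i, hi⟩) h3
      rwa [WittVector.coeff_truncate, TruncatedWittVector.coeff_zero] at this
  rw [key]
  constructor
  · intro h i hi
    have := congrArg (TruncatedWittVector.coeff ⟨i, hi⟩) h
    rwa [WittVector.coeff_truncate, WittVector.coeff_truncate] at this
  · intro h
    ext ⟨j, hj⟩
    rw [WittVector.coeff_truncate, WittVector.coeff_truncate]
    exact h j hj

private lemma aux_ghost_zero (x : WittVector p k) :
    WittVector.ghostComponent 0 x = x.coeff 0 := by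
  simp [WittVector.ghostComponent_apply, wittPolynomial_zero]

/-- Over a perfect field `k` of characteristic `p`, the function `v` with `v 0 = ∞` and
`v x = n` iff `x_n` is the first nonzero coordinate is a valuation making `W_p(k)` a
complete discrete valuation ring of characteristic zero with maximal ideal generated by
`p` and residue field `k`. -/
theorem stmt11 (p : ℕ) [Fact p.Prime] (k : Type) [Field k] [CharP k p]
    (hperf : Function.Bijective fun a : k => a ^ p) :
    ∃ v : WittVector p k → ℕ∞,
      (∀ x : WittVector p k, v x = ⊤ ↔ x = 0) ∧
      (∀ (x : WittVector p k) (n : ℕ),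
        v x = (n : ℕ∞) ↔ x.coeff n ≠ 0 ∧ ∀ m < n, x.coeff m = 0) ∧
      (∀ x y : WittVector p k, v (x * y) = v x + v y) ∧
      (∀ x y : WittVector p k, min (v x) (v y) ≤ v (x + y)) ∧
      CharZero (WittVector p k) ∧
      (∃ hd : IsDomain (WittVector p k),
        @IsDiscreteValuationRing (WittVector p k) _ hd) ∧
      IsAdicComplete (Ideal.span {(p : WittVector p k)}) (WittVector p k) ∧
      Function.Surjective (WittVector.ghostComponent 0 : WittVector p k →+* k) ∧
      RingHom.ker (WittVector.ghostComponent 0 : WittVector p k →+* k) =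
        Ideal.span {(p : WittVector p k)} ∧
      ∃ h : IsLocalRing (WittVector p k),
        @IsLocalRing.maximalIdeal (WittVector p k) _ h =
          Ideal.span {(p : WittVector p k)} := by
  classical
  haveI : PerfectRing k p := ⟨by
    have hfr : ⇑(_root_.frobenius k p) = fun a : k => a ^ p :=
      funext fun a => by simp [frobenius_def]
    exact hperf⟩
  haveI hd : IsDomain (WittVector p k) := WittVector.instIsDomain
  -- existence of nonzero coefficient for nonzero vectors
  have hex : ∀ x : WittVector p k, x ≠ 0 → ∃ n, x.coeff n ≠ 0 := by
    intro x hx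
    by_contra! hall
    exact hx (by ext i; simp [hall i])
  -- the valuation
  set v : WittVector p k → ℕ∞ := fun x =>
    if h : x = 0 then ⊤ else ((Nat.find (hex x h) : ℕ) : ℕ∞) with hv
  have hvtop : ∀ x : WittVector p k, v x = ⊤ ↔ x = 0 := by
    intro x
    constructor
    · intro h
      by_contra hx
      rw [hv] at h
      simp only [dif_neg hx] at h
      exact (WithTop.natCast_ne_top _) h
    · intro h; simp [hv, h]
  have hchar : ∀ (x : WittVector p k) (n : ℕ),
      v x = (n : ℕ∞) ↔ x.coeff n ≠ 0 ∧ ∀ m < n, x.coeff m = 0 := by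
    intro x n
    by_cases hx : x = 0
    · subst hx
      simp [hv]
    · rw [hv]
      simp only [dif_neg hx, Nat.cast_inj]
      rw [Nat.find_eq_iff (hex x hx)]
      simp only [not_not]
  have hge : ∀ (z : WittVector p k) (N : ℕ), (N : ℕ∞) ≤ v z → ∀ l < N, z.coeff l = 0 := by
    intro z N hN l hl
    by_cases hz : z = 0
    · simp [hz]
    · rw [hv] at hN
      simp only [dif_neg hz, Nat.cast_le] at hN
      exact not_not.mp (Nat.find_min (hex z hz) (lt_of_lt_of_le hl hN))
  have hle : ∀ (z : WittVector p k) (N : ℕ), (∀ l < N, z.coeff l = 0) → (N : ℕ∞) ≤ v z := by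
    intro z N h
    by_cases hz : z = 0
    · simp [hv, hz]
    · rw [hv]
      simp only [dif_neg hz, Nat.cast_le]
      by_contra hlt
      exact Nat.find_spec (hex z hz) (h _ (not_le.mp hlt))
  have hmul : ∀ x y : WittVector p k, v (x * y) = v x + v y := by
    intro x y
    by_cases hx : x = 0
    · rw [hx, zero_mul, (hvtop 0).mpr rfl, top_add]
    by_cases hy : y = 0
    · rw [hy, mul_zero, (hvtop 0).mpr rfl, add_top]
    obtain ⟨m, hm⟩ : ∃ m : ℕ, v x = (m : ℕ∞) :=
      ⟨Nat.find (hex x hx), by rw [hv]; simp only [dif_neg hx]⟩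
    obtain ⟨n, hn⟩ : ∃ n : ℕ, v y = (n : ℕ∞) :=
      ⟨Nat.find (hex y hy), by rw [hv]; simp only [dif_neg hy]⟩
    obtain ⟨hx1, hx2⟩ := (hchar x m).mp hm
    obtain ⟨hy1, hy2⟩ := (hchar y n).mp hn
    rw [hm, hn, ← Nat.cast_add, hchar]
    have hxv : x = verschiebung^[m] (x.shift m) := eq_iterate_verschiebung hx2
    have hyv : y = verschiebung^[n] (y.shift n) := eq_iterate_verschiebung hy2
    constructor
    · rw [hxv, hyv, iterate_verschiebung_mul_coeff]
      have h1 : (x.shift m).coeff 0 ≠ 0 := by rwa [shift_coeff, add_zero]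
      have h2 : (y.shift n).coeff 0 ≠ 0 := by rwa [shift_coeff, add_zero]
      exact mul_ne_zero (pow_ne_zero _ h1) (pow_ne_zero _ h2)
    · intro l hl
      rw [hxv, hyv, iterate_verschiebung_mul]
      exact aux_iter_v_coeff_lt _ _ l hl
  have hadd : ∀ x y : WittVector p k, min (v x) (v y) ≤ v (x + y) := by
    intro x y
    by_cases hmin : min (v x) (v y) = ⊤
    · have hx : x = 0 := (hvtop x).mp (by
        have := min_le_left (v x) (v y); rw [hmin] at this; exact top_le_iff.mp this)
      have hy : y = 0 := (hvtop y).mp (by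
        have := min_le_right (v x) (v y); rw [hmin] at this; exact top_le_iff.mp this)
      simp [hx, hy, hmin.le]
    · obtain ⟨N, hN⟩ := WithTop.ne_top_iff_exists.mp hmin
      rw [← hN]
      apply hle
      intro l hl
      have hdx : (p : WittVector p k) ^ N ∣ x :=
        (aux_dvd_iff x N).mpr (hge x N (hN.le.trans (min_le_left _ _)))
      have hdy : (p : WittVector p k) ^ N ∣ y :=
        (aux_dvd_iff y N).mpr (hge y N (hN.le.trans (min_le_right _ _)))
      exact (aux_dvd_iff (x + y) N).mp (dvd_add hdx hdy) l hl
  have hczero : CharZero (WittVector p k) := by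
    apply charZero_of_inj_zero
    intro n hn
    by_contra hn0
    have hfac := Nat.ordProj_mul_ordCompl_eq_self n p
    have ht : ¬ p ∣ n / p ^ n.factorization p := Nat.not_dvd_ordCompl Fact.out hn0
    have htk : ((n / p ^ n.factorization p : ℕ) : k) ≠ 0 := by
      rw [Ne, CharP.cast_eq_zero_iff k p]; exact ht
    have htW : ((n / p ^ n.factorization p : ℕ) : WittVector p k) ≠ 0 := by
      intro h
      apply htk
      have := congrArg (WittVector.constantCoeff : WittVector p k →+* k) h
      simpa using this
    have : (n : WittVector p k) ≠ 0 := by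
      rw [← hfac]
      push_cast
      exact mul_ne_zero (pow_ne_zero _ (p_nonzero p k)) htW
    exact this hn
  have hirr := WittVector.irreducible p (k := k)
  have hdvr : IsDiscreteValuationRing (WittVector p k) := WittVector.isDiscreteValuationRing
  haveI := hdvr
  have hloc : IsLocalRing (WittVector p k) := inferInstance
  have hmax : @IsLocalRing.maximalIdeal (WittVector p k) _ hloc =
      Ideal.span {(p : WittVector p k)} := by
    ext x
    rw [IsLocalRing.mem_maximalIdeal, Ideal.mem_span_singleton]
    constructor
    · intro hx
      have h0 : x.coeff 0 = 0 := by
        by_contra h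
        exact hx (isUnit_of_coeff_zero_ne_zero x h)
      have := (aux_dvd_iff x 1).mpr (by intro i hi; interval_cases i; exact h0)
      simpa using this
    · rintro ⟨y, rfl⟩ hu
      exact hirr.not_isUnit (isUnit_of_mul_isUnit_left hu)
  have hcomplete : IsAdicComplete (Ideal.span {(p : WittVector p k)}) (WittVector p k) := by
    have hmem : ∀ (z : WittVector p k) (n : ℕ),
        z ∈ (Ideal.span {(p : WittVector p k)} ^ n • ⊤ : Ideal (WittVector p k)) ↔
          (p : WittVector p k) ^ n ∣ z := by
      intro z n
      rw [smul_eq_mul, Ideal.mul_top, Ideal.span_singleton_pow,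
        Ideal.mem_span_singleton]
    haveI h1 : IsHausdorff (Ideal.span {(p : WittVector p k)}) (WittVector p k) := by
      constructor
      intro x h
      ext i
      rw [zero_coeff]
      have := h (i + 1)
      rw [SModEq.zero, hmem] at this
      exact (aux_dvd_iff x (i + 1)).mp this i (by omega)
    haveI h2 : IsPrecomplete (Ideal.span {(p : WittVector p k)}) (WittVector p k) := by
      constructor
      intro f hf
      refine ⟨WittVector.mk p (fun n => (f (n + 1)).coeff n), fun n => ?_⟩
      rw [SModEq.sub_mem, hmem, aux_sub_dvd_iff]
      intro i hi
      have h1 : (p : WittVector p k) ^ (i + 1) ∣ f (i + 1) - f n := by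
        have := hf (show i + 1 ≤ n by omega)
        rwa [SModEq.sub_mem, hmem] at this
      have := (aux_sub_dvd_iff (f (i + 1)) (f n) (i + 1)).mp h1 i (by omega)
      rw [WittVector.coeff_mk, ← this]
    exact ⟨⟩
  refine ⟨v, hvtop, hchar, hmul, hadd, hczero, ⟨hd, hdvr⟩, hcomplete, ?_, ?_, hloc, hmax⟩
  · intro a
    refine ⟨WittVector.mk p (fun n => if n = 0 then a else 0), ?_⟩
    rw [aux_ghost_zero, WittVector.coeff_mk]
    simp
  · ext x
    rw [RingHom.mem_ker, Ideal.mem_span_singleton, aux_ghost_zero]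
    constructor
    · intro h
      have := (aux_dvd_iff x 1).mpr (by intro i hi; interval_cases i; exact h)
      simpa using this
    · intro h
      have := (aux_dvd_iff x 1).mp (by simpa using h) 0 (by omega)
      exact this
end
end

section
/- For any commutative ring A and x, y ∈ A, the multiplication on the big Witt vectors, viewed as power series with constant term 1 under the rule (1 - ξt)^{-1} * (1 - ηt)^{-1} = (1 - ξηt)^{-1} extended by distributivity over power series multiplication, satisfies: on ghost components, s_n(f * g) = s_n(f) · s_n(g), where s_n(f) is the coefficient of t^n in t·(d/dt)log f(t). -/
noncomputable section Stmt13Aux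
namespace Stmt13Aux
open PowerSeries

variable {A B : Type} [CommRing A] [CommRing B]

/-- `T f = t f'(t)` -/
def T (f : PowerSeries A) : PowerSeries A := PowerSeries.mk fun m => (m : A) * coeff m f

/-- ghost series `t f'/f` -/
def sG (f : PowerSeries A) : PowerSeries A := T f * invOfUnit f 1

/-- `(1-xt)⁻¹` -/
def L (x : A) : PowerSeries A := PowerSeries.mk fun m => x ^ m

lemma cc_L (x : A) : constantCoeff (L x) = 1 := by simp [L]

lemma mul_invOfUnit_one {f : PowerSeries A} (hf : constantCoeff f = 1) :
    f * invOfUnit f 1 = 1 := mul_invOfUnit f 1 (by simpa using hf)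

lemma inv_unique {f a : PowerSeries A} (hf : constantCoeff f = 1)
    (ha : f * a = 1) : a = invOfUnit f 1 := by
  have h2 := mul_invOfUnit_one hf
  calc a = a * (f * invOfUnit f 1) := by rw [h2, mul_one]
    _ = (f * a) * invOfUnit f 1 := by ring
    _ = invOfUnit f 1 := by rw [ha, one_mul]

lemma one_sub_mul_L (x : A) : (1 - C x * X) * L x = 1 := by
  have : (1 - C x * X) * L x = L x - C x * (X * L x) := by ring
  rw [this]
  ext n
  cases n with
  | zero => simp [L, coeff_zero_eq_constantCoeff]
  | succ n =>
      simp [L, coeff_succ_X_mul, smul_eq_C_mul, pow_succ, mul_comm]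

lemma invOfUnit_L (x : A) : invOfUnit (L x) 1 = 1 - C x * X :=
  (inv_unique (cc_L x) (by rw [mul_comm]; exact one_sub_mul_L x)).symm

lemma invOfUnit_mul_of {f g : PowerSeries A} (hf : constantCoeff f = 1)
    (hg : constantCoeff g = 1) :
    invOfUnit (f * g) 1 = invOfUnit f 1 * invOfUnit g 1 := by
  refine (inv_unique (by simp [map_mul, hf, hg]) ?_).symm
  calc f * g * (invOfUnit f 1 * invOfUnit g 1)
      = (f * invOfUnit f 1) * (g * invOfUnit g 1) := by ring
    _ = 1 := by rw [mul_invOfUnit_one hf, mul_invOfUnit_one hg, one_mul]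

lemma T_eq (f : PowerSeries A) : T f = X * derivativeFun f := by
  ext n
  cases n with
  | zero => simp [T]
  | succ n =>
      simp [T, coeff_succ_X_mul, coeff_derivativeFun]
      rw [show f.derivativeFun = derivative A f from rfl, coeff_derivative]
      ring

lemma T_mul (f g : PowerSeries A) : T (f * g) = T f * g + f * T g := by
  simp only [T_eq, derivativeFun_mul, smul_eq_mul]
  ring

lemma sG_mul {f g : PowerSeries A} (hf : constantCoeff f = 1)
    (hg : constantCoeff g = 1) : sG (f * g) = sG f + sG g := by
  unfold sG
  rw [T_mul, invOfUnit_mul_of hf hg]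
  calc (T f * g + f * T g) * (invOfUnit f 1 * invOfUnit g 1)
      = T f * invOfUnit f 1 * (g * invOfUnit g 1)
        + T g * invOfUnit g 1 * (f * invOfUnit f 1) := by ring
    _ = T f * invOfUnit f 1 + T g * invOfUnit g 1 := by
        rw [mul_invOfUnit_one hf, mul_invOfUnit_one hg, mul_one, mul_one]

lemma T_one : T (1 : PowerSeries A) = 0 := by
  ext n
  cases n with
  | zero => simp [T]
  | succ n => simp [T, coeff_one]

lemma sG_one : sG (1 : PowerSeries A) = 0 := by rw [sG, T_one, zero_mul]

lemma sG_prod {σ : Type*} (s : Finset σ) (F : σ → PowerSeries A)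
    (h : ∀ i ∈ s, constantCoeff (F i) = 1) :
    sG (∏ i ∈ s, F i) = ∑ i ∈ s, sG (F i) := by
  classical
  induction s using Finset.induction_on with
  | empty => simpa using sG_one
  | @insert a s ha ih =>
      rw [Finset.prod_insert ha, Finset.sum_insert ha,
        sG_mul (h a (Finset.mem_insert_self a s))
          (by rw [map_prod]; exact Finset.prod_eq_one fun i hi => h i (Finset.mem_insert_of_mem hi)),
        ih fun i hi => h i (Finset.mem_insert_of_mem hi)]

lemma coeff_sG_L (x : A) (n : ℕ) : coeff (n + 1) (sG (L x)) = x ^ (n + 1) := by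
  rw [sG, invOfUnit_L]
  have : T (L x) * (1 - C x * X) = T (L x) - C x * (X * T (L x)) := by ring
  rw [this, map_sub]
  simp only [T, L, coeff_mk, coeff_succ_X_mul, coeff_C_mul]
  cases n with
  | zero => simp
  | succ n =>
      push_cast
      ring

lemma coeff_zero_sG (f : PowerSeries A) : coeff 0 (sG f) = 0 := by
  rw [coeff_zero_eq_constantCoeff, sG, map_mul]
  simp [T, constantCoeff_mk]

lemma map_T (ψ : A →+* B) (f : PowerSeries A) : map ψ (T f) = T (map ψ f) := by
  ext n
  simp only [T, coeff_map, coeff_mk, map_mul, map_natCast]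

lemma map_invOfUnit_one (ψ : A →+* B) {f : PowerSeries A} (hf : constantCoeff f = 1) :
    map ψ (invOfUnit f 1) = invOfUnit (map ψ f) 1 := by
  refine inv_unique (by rw [← coeff_zero_eq_constantCoeff_apply, coeff_map, coeff_zero_eq_constantCoeff_apply, hf, map_one]) ?_
  rw [← map_mul, mul_invOfUnit_one hf, map_one]

lemma map_sG (ψ : A →+* B) {f : PowerSeries A} (hf : constantCoeff f = 1) :
    map ψ (sG f) = sG (map ψ f) := by
  rw [sG, sG, map_mul, map_T, map_invOfUnit_one ψ hf]


section Injectivity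
open MvPolynomial

/-- elementary symmetric substitution, over any coefficient ring -/
def eA (k N : ℕ) (R : Type*) [CommRing R] : MvPolynomial (Fin k) R →ₐ[R] MvPolynomial (Fin N) R :=
  aeval fun i => esymm (Fin N) R (i + 1)

lemma eA_inj {k N : ℕ} (h : k ≤ N) (R : Type*) [CommRing R] :
    Function.Injective (eA k N R) := by
  intro p q hpq
  apply esymmAlgHom_fin_injective R h (n := k)
  apply Subtype.ext
  rw [esymmAlgHom_apply, esymmAlgHom_apply]
  exact hpq

/-- substitute esymm in the left variables, keep right variables -/
def oneSide (k N : ℕ) (τ : Type) : MvPolynomial (Fin k ⊕ τ) ℤ →ₐ[ℤ] MvPolynomial (Fin N ⊕ τ) ℤ :=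
  (sumAlgEquiv ℤ (Fin N) τ).symm.toAlgHom.comp
    (((eA k N (MvPolynomial τ ℤ)).restrictScalars ℤ).comp (sumAlgEquiv ℤ (Fin k) τ).toAlgHom)

lemma oneSide_inj {k N : ℕ} (h : k ≤ N) (τ : Type) : Function.Injective (oneSide k N τ) := by
  unfold oneSide
  simp only [AlgHom.coe_comp, AlgEquiv.toAlgHom_eq_coe, AlgHom.coe_coe]
  exact (AlgEquiv.injective _).comp ((eA_inj h _).comp (AlgEquiv.injective _))

lemma oneSide_Xl {k N : ℕ} (τ : Type) (i : Fin k) :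
    oneSide k N τ (X (Sum.inl i)) = rename Sum.inl (esymm (Fin N) ℤ (i + 1)) := by
  have h1 : (sumAlgEquiv ℤ (Fin k) τ) (X (Sum.inl i)) = X i := by simp
  have h2 : eA k N (MvPolynomial τ ℤ) (X i) = esymm (Fin N) (MvPolynomial τ ℤ) (i + 1) := by
    simp [eA]
  have h3 : (sumAlgEquiv ℤ (Fin N) τ) (rename Sum.inl (esymm (Fin N) ℤ (i + 1))) =
      esymm (Fin N) (MvPolynomial τ ℤ) (i + 1) := by
    have := congrArg (fun F => F (esymm (Fin N) ℤ (i + 1)))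
      (sumAlgEquiv_comp_rename_inl ℤ (Fin N) τ)
    simp only [AlgHom.comp_apply, AlgEquiv.toAlgHom_eq_coe, AlgHom.coe_coe, AlgEquiv.coe_algHom] at this
    rw [this]
    show MvPolynomial.map (algebraMap ℤ (MvPolynomial τ ℤ)) _ = _
    rw [map_esymm]
  simp only [oneSide, AlgHom.comp_apply, AlgEquiv.toAlgHom_eq_coe, AlgHom.coe_coe,
    AlgEquiv.coe_algHom, AlgHom.coe_restrictScalars', h1, h2]
  rw [← h3, AlgEquiv.symm_apply_apply]

lemma oneSide_Xr {k N : ℕ} (τ : Type) (t : τ) :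
    oneSide k N τ (X (Sum.inr t)) = X (Sum.inr t) := by
  have h1 : (sumAlgEquiv ℤ (Fin k) τ) (X (Sum.inr t)) = MvPolynomial.C (X t) := by simp
  have h2 : eA k N (MvPolynomial τ ℤ) (MvPolynomial.C (X t)) = MvPolynomial.C (X t) := by
    simp [eA, algebraMap_eq]
  have h3 : (sumAlgEquiv ℤ (Fin N) τ) (X (Sum.inr t) : MvPolynomial (Fin N ⊕ τ) ℤ) = MvPolynomial.C (X t) := by
    simp
  simp only [oneSide, AlgHom.comp_apply, AlgEquiv.toAlgHom_eq_coe, AlgHom.coe_coe,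
    AlgEquiv.coe_algHom, AlgHom.coe_restrictScalars', h1, h2]
  rw [← h3, AlgEquiv.symm_apply_apply]

/-- substitute esymm in the right variables, keep left variables -/
def otherSide (k N : ℕ) (σ : Type) :
    MvPolynomial (σ ⊕ Fin k) ℤ →ₐ[ℤ] MvPolynomial (σ ⊕ Fin N) ℤ :=
  (renameEquiv ℤ (Equiv.sumComm (Fin N) σ)).toAlgHom.comp
    ((oneSide k N σ).comp (renameEquiv ℤ (Equiv.sumComm σ (Fin k))).toAlgHom)

lemma otherSide_inj {k N : ℕ} (h : k ≤ N) (σ : Type) :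
    Function.Injective (otherSide k N σ) := by
  unfold otherSide
  simp only [AlgHom.coe_comp, AlgEquiv.toAlgHom_eq_coe, AlgHom.coe_coe]
  exact (AlgEquiv.injective _).comp ((oneSide_inj h _).comp (AlgEquiv.injective _))

lemma otherSide_Xl {k N : ℕ} (σ : Type) (s : σ) :
    otherSide k N σ (X (Sum.inl s)) = X (Sum.inl s) := by
  simp only [otherSide, AlgHom.comp_apply, AlgEquiv.toAlgHom_eq_coe, AlgHom.coe_coe,
    AlgEquiv.coe_algHom, renameEquiv_apply, rename_X, Equiv.sumComm_apply, Sum.swap_inl]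
  rw [oneSide_Xr]
  simp

lemma otherSide_Xr {k N : ℕ} (σ : Type) (i : Fin k) :
    otherSide k N σ (X (Sum.inr i)) = rename Sum.inr (esymm (Fin N) ℤ (i + 1)) := by
  simp only [otherSide, AlgHom.comp_apply, AlgEquiv.toAlgHom_eq_coe, AlgHom.coe_coe,
    AlgEquiv.coe_algHom, renameEquiv_apply, rename_X, Equiv.sumComm_apply, Sum.swap_inr]
  rw [oneSide_Xl, rename_rename]
  rfl

/-- the doubled esymm substitution -/
def Phi (k N : ℕ) : MvPolynomial (Fin k ⊕ Fin k) ℤ →ₐ[ℤ] MvPolynomial (Fin N ⊕ Fin N) ℤ :=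
  (otherSide k N (Fin N)).comp (oneSide k N (Fin k))

lemma Phi_inj {k N : ℕ} (h : k ≤ N) : Function.Injective (Phi k N) := by
  rw [Phi, AlgHom.coe_comp]; exact (otherSide_inj h _).comp (oneSide_inj h _)

lemma Phi_Xl {k N : ℕ} (i : Fin k) :
    Phi k N (X (Sum.inl i)) = rename Sum.inl (esymm (Fin N) ℤ (i + 1)) := by
  rw [Phi, AlgHom.comp_apply, oneSide_Xl]
  have : ∀ p : MvPolynomial (Fin N) ℤ,
      otherSide k N (Fin N) (rename Sum.inl p) = rename Sum.inl p := by
    intro p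
    have : (otherSide k N (Fin N)).comp (rename (R := ℤ) Sum.inl) =
        (rename (R := ℤ) Sum.inl) := by
      apply algHom_ext
      intro j
      simp only [AlgHom.comp_apply, rename_X]
      rw [otherSide_Xl]
    exact congrArg (fun F => F p) this
  rw [this]

lemma Phi_Xr {k N : ℕ} (i : Fin k) :
    Phi k N (X (Sum.inr i)) = rename Sum.inr (esymm (Fin N) ℤ (i + 1)) := by
  rw [Phi, AlgHom.comp_apply, oneSide_Xr, otherSide_Xr]

end Injectivity

section CoeffProd
open PowerSeries

lemma coeff_prod_one_add {σ : Type*} [DecidableEq σ] (s : Finset σ) (x : σ → A) :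
    ∀ m, coeff m (∏ j ∈ s, (1 + C (x j) * X)) =
      ∑ t ∈ s.powersetCard m, ∏ j ∈ t, x j := by
  classical
  induction s using Finset.induction_on with
  | empty =>
      intro m
      cases m with
      | zero => simp
      | succ m =>
          rw [Finset.powersetCard_eq_empty.mpr (by simp), Finset.sum_empty]
          simp [coeff_one]
  | @insert a s' ha ih =>
      intro m
      rw [Finset.prod_insert ha]
      have expand : (1 + C (x a) * X) * ∏ j ∈ s', (1 + C (x j) * X) =
          (∏ j ∈ s', (1 + C (x j) * X)) +
            C (x a) * (X * ∏ j ∈ s', (1 + C (x j) * X)) := by ring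
      rw [expand]
      cases m with
      | zero =>
          rw [map_add, ih 0]
          simp
      | succ m =>
          rw [map_add, coeff_C_mul, coeff_succ_X_mul, ih (m + 1), ih m,
            Finset.powersetCard_succ_insert ha]
          rw [Finset.sum_union]
          · congr 1
            rw [Finset.sum_image]
            · rw [Finset.mul_sum]
              refine Finset.sum_congr rfl fun t ht => ?_
              have hat : a ∉ t := fun hat => ha
                ((Finset.mem_powersetCard.mp ht).1 hat)
              rw [Finset.prod_insert hat]
            · intro t ht u hu htu
              have hat : a ∉ t := fun h => ha ((Finset.mem_powersetCard.mp ht).1 h)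
              have hau : a ∉ u := fun h => ha ((Finset.mem_powersetCard.mp hu).1 h)
              rw [← Finset.erase_insert hat, ← Finset.erase_insert hau, htu]
          · rw [Finset.disjoint_left]
            intro t ht hmem
            obtain ⟨u, hu, rfl⟩ := Finset.mem_image.mp hmem
            exact ha ((Finset.mem_powersetCard.mp ht).1 (Finset.mem_insert_self a u))

end CoeffProd

section MulStruct

variable (mul : ∀ (A : Type) [CommRing A], PowerSeries A → PowerSeries A → PowerSeries A)

lemma mulf_one
    (hone : ∀ (A : Type) [CommRing A] (f g : PowerSeries A),
      constantCoeff f = 1 → constantCoeff g = 1 → constantCoeff (mul A f g) = 1)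
    (hdistl : ∀ (A : Type) [CommRing A] (f g h : PowerSeries A),
      constantCoeff f = 1 → constantCoeff g = 1 → constantCoeff h = 1 →
      mul A f (g * h) = mul A f g * mul A f h)
    {f : PowerSeries A} (hf : constantCoeff f = 1) : mul A f 1 = 1 := by
  have h1 : constantCoeff (1 : PowerSeries A) = 1 := map_one _
  have h := hdistl A f 1 1 hf h1 h1
  rw [mul_one] at h
  have hinv := mul_invOfUnit_one (hone A f 1 hf h1)
  calc mul A f 1 = mul A f 1 * mul A f 1 * invOfUnit (mul A f 1) 1 := by
        rw [mul_assoc, hinv, mul_one]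
    _ = mul A f 1 * invOfUnit (mul A f 1) 1 := by rw [← h]
    _ = 1 := hinv

lemma one_mulf
    (hone : ∀ (A : Type) [CommRing A] (f g : PowerSeries A),
      constantCoeff f = 1 → constantCoeff g = 1 → constantCoeff (mul A f g) = 1)
    (hdistr : ∀ (A : Type) [CommRing A] (f g h : PowerSeries A),
      constantCoeff f = 1 → constantCoeff g = 1 → constantCoeff h = 1 →
      mul A (f * g) h = mul A f h * mul A g h)
    {f : PowerSeries A} (hf : constantCoeff f = 1) : mul A 1 f = 1 := by
  have h1 : constantCoeff (1 : PowerSeries A) = 1 := map_one _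
  have h := hdistr A 1 1 f h1 h1 hf
  rw [mul_one] at h
  have hinv := mul_invOfUnit_one (hone A 1 f h1 hf)
  calc mul A 1 f = mul A 1 f * mul A 1 f * invOfUnit (mul A 1 f) 1 := by
        rw [mul_assoc, hinv, mul_one]
    _ = mul A 1 f * invOfUnit (mul A 1 f) 1 := by rw [← h]
    _ = 1 := hinv

lemma mulf_prod_right
    (hone : ∀ (A : Type) [CommRing A] (f g : PowerSeries A),
      constantCoeff f = 1 → constantCoeff g = 1 → constantCoeff (mul A f g) = 1)
    (hdistl : ∀ (A : Type) [CommRing A] (f g h : PowerSeries A),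
      constantCoeff f = 1 → constantCoeff g = 1 → constantCoeff h = 1 →
      mul A f (g * h) = mul A f g * mul A f h)
    {σ : Type*} (t : Finset σ) (G : σ → PowerSeries A) {f : PowerSeries A}
    (hf : constantCoeff f = 1) (hG : ∀ j ∈ t, constantCoeff (G j) = 1) :
    mul A f (∏ j ∈ t, G j) = ∏ j ∈ t, mul A f (G j) := by
  classical
  induction t using Finset.induction_on with
  | empty => simpa using mulf_one mul hone hdistl hf
  | @insert a t' ha ih =>
      have hGa := hG a (Finset.mem_insert_self a t')
      have hGt : ∀ j ∈ t', constantCoeff (G j) = 1 :=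
        fun j hj => hG j (Finset.mem_insert_of_mem hj)
      have hccp : constantCoeff (∏ j ∈ t', G j) = 1 := by
        rw [map_prod]; exact Finset.prod_eq_one hGt
      rw [Finset.prod_insert ha, Finset.prod_insert ha,
        hdistl A f (G a) (∏ j ∈ t', G j) hf hGa hccp, ih hGt]

lemma mulf_prod_left
    (hone : ∀ (A : Type) [CommRing A] (f g : PowerSeries A),
      constantCoeff f = 1 → constantCoeff g = 1 → constantCoeff (mul A f g) = 1)
    (hdistr : ∀ (A : Type) [CommRing A] (f g h : PowerSeries A),
      constantCoeff f = 1 → constantCoeff g = 1 → constantCoeff h = 1 →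
      mul A (f * g) h = mul A f h * mul A g h)
    {σ : Type*} (t : Finset σ) (G : σ → PowerSeries A) {f : PowerSeries A}
    (hf : constantCoeff f = 1) (hG : ∀ j ∈ t, constantCoeff (G j) = 1) :
    mul A (∏ j ∈ t, G j) f = ∏ j ∈ t, mul A (G j) f := by
  classical
  induction t using Finset.induction_on with
  | empty => simpa using one_mulf mul hone hdistr hf
  | @insert a t' ha ih =>
      have hGa := hG a (Finset.mem_insert_self a t')
      have hGt : ∀ j ∈ t', constantCoeff (G j) = 1 :=
        fun j hj => hG j (Finset.mem_insert_of_mem hj)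
      have hccp : constantCoeff (∏ j ∈ t', G j) = 1 := by
        rw [map_prod]; exact Finset.prod_eq_one hGt
      rw [Finset.prod_insert ha, Finset.prod_insert ha,
        hdistr A (G a) (∏ j ∈ t', G j) f hGa hccp hf, ih hGt]

end MulStruct

section SRing

variable (k : ℕ)

/-- abbreviation for the symmetric-function ring -/
abbrev SR (k : ℕ) : Type := MvPolynomial (Fin k ⊕ Fin k) ℤ

def xiL (j : Fin k) : SR k := MvPolynomial.X (Sum.inl j)
def xiR (j : Fin k) : SR k := MvPolynomial.X (Sum.inr j)

def EL : PowerSeries (SR k) := ∏ j : Fin k, (1 + PowerSeries.C (xiL k j) * PowerSeries.X)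
def ER : PowerSeries (SR k) := ∏ j : Fin k, (1 + PowerSeries.C (xiR k j) * PowerSeries.X)
def uL : PowerSeries (SR k) := ∏ j : Fin k, L (-(xiL k j))
def uR : PowerSeries (SR k) := ∏ j : Fin k, L (-(xiR k j))

lemma cc_one_add (x : A) : constantCoeff (1 + C x * X) = 1 := by simp

lemma cc_EL : constantCoeff (EL k) = 1 := by
  rw [EL, map_prod]; exact Finset.prod_eq_one fun j _ => cc_one_add _
lemma cc_ER : constantCoeff (ER k) = 1 := by
  rw [ER, map_prod]; exact Finset.prod_eq_one fun j _ => cc_one_add _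
lemma cc_uL : constantCoeff (uL k) = 1 := by
  rw [uL, map_prod]; exact Finset.prod_eq_one fun j _ => cc_L _
lemma cc_uR : constantCoeff (uR k) = 1 := by
  rw [uR, map_prod]; exact Finset.prod_eq_one fun j _ => cc_L _

lemma one_add_mul_L (x : A) : (1 + C x * X) * L (-x) = 1 := by
  have := one_sub_mul_L (-x)
  rwa [map_neg, neg_mul, sub_neg_eq_add] at this

lemma EL_mul_uL : EL k * uL k = 1 := by
  rw [EL, uL, ← Finset.prod_mul_distrib]
  exact Finset.prod_eq_one fun j _ => one_add_mul_L _

lemma ER_mul_uR : ER k * uR k = 1 := by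
  rw [ER, uR, ← Finset.prod_mul_distrib]
  exact Finset.prod_eq_one fun j _ => one_add_mul_L _

lemma coeff_EL (m : ℕ) :
    coeff m (EL k) = MvPolynomial.rename Sum.inl (MvPolynomial.esymm (Fin k) ℤ m) := by
  rw [EL]
  rw [coeff_prod_one_add Finset.univ (fun j => xiL k j) m]
  rw [MvPolynomial.esymm, map_sum]
  refine Finset.sum_congr rfl fun t _ => ?_
  rw [map_prod]
  exact Finset.prod_congr rfl fun j _ => (MvPolynomial.rename_X _ _).symm

lemma coeff_ER (m : ℕ) :
    coeff m (ER k) = MvPolynomial.rename Sum.inr (MvPolynomial.esymm (Fin k) ℤ m) := by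
  rw [ER]
  rw [coeff_prod_one_add Finset.univ (fun j => xiR k j) m]
  rw [MvPolynomial.esymm, map_sum]
  refine Finset.sum_congr rfl fun t _ => ?_
  rw [map_prod]
  exact Finset.prod_congr rfl fun j _ => (MvPolynomial.rename_X _ _).symm

end SRing

section KeyS

variable (mul : ∀ (A : Type) [CommRing A], PowerSeries A → PowerSeries A → PowerSeries A)

lemma key_S
    (hone : ∀ (A : Type) [CommRing A] (f g : PowerSeries A),
      constantCoeff f = 1 → constantCoeff g = 1 → constantCoeff (mul A f g) = 1)
    (hdistl : ∀ (A : Type) [CommRing A] (f g h : PowerSeries A),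
      constantCoeff f = 1 → constantCoeff g = 1 → constantCoeff h = 1 →
      mul A f (g * h) = mul A f g * mul A f h)
    (hdistr : ∀ (A : Type) [CommRing A] (f g h : PowerSeries A),
      constantCoeff f = 1 → constantCoeff g = 1 → constantCoeff h = 1 →
      mul A (f * g) h = mul A f h * mul A g h)
    (hlin : ∀ (A : Type) [CommRing A] (x y : A),
      mul A (PowerSeries.mk fun m => x ^ m) (PowerSeries.mk fun m => y ^ m) =
        PowerSeries.mk fun m => (x * y) ^ m)
    (k n : ℕ) :
    coeff (n + 1) (sG (mul (SR k) (EL k) (ER k))) =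
      coeff (n + 1) (sG (EL k)) * coeff (n + 1) (sG (ER k)) := by
  have hLxy : ∀ x y : SR k, mul (SR k) (L x) (L y) = L (x * y) := fun x y => hlin (SR k) x y
  have ccLs : ∀ (x : SR k), constantCoeff (L x) = 1 := cc_L
  -- mul of uL and uR is the product of linear pieces
  have hmul_uv : mul (SR k) (uL k) (uR k) =
      ∏ i : Fin k, ∏ j : Fin k, L (xiL k i * xiR k j) := by
    rw [uL, mulf_prod_left mul hone hdistr Finset.univ _ (cc_uR k) (fun j _ => ccLs _)]
    refine Finset.prod_congr rfl fun i _ => ?_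
    rw [uR, mulf_prod_right mul hone hdistl Finset.univ _ (ccLs _) (fun j _ => ccLs _)]
    refine Finset.prod_congr rfl fun j _ => ?_
    rw [hLxy, neg_mul_neg]
  -- constant coefficients
  have ccmulEE := hone (SR k) _ _ (cc_EL k) (cc_ER k)
  have ccmuluE := hone (SR k) _ _ (cc_uL k) (cc_ER k)
  have ccmuluu := hone (SR k) _ _ (cc_uL k) (cc_uR k)
  -- first exchange: sG (mul EL ER) = - sG (mul uL ER)
  have h1 : mul (SR k) (EL k * uL k) (ER k) =
      mul (SR k) (EL k) (ER k) * mul (SR k) (uL k) (ER k) :=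
    hdistr _ _ _ _ (cc_EL k) (cc_uL k) (cc_ER k)
  rw [EL_mul_uL, one_mulf mul hone hdistr (cc_ER k)] at h1
  have e1 : sG (mul (SR k) (EL k) (ER k)) + sG (mul (SR k) (uL k) (ER k)) = 0 := by
    rw [← sG_mul ccmulEE ccmuluE, ← h1, sG_one]
  have h2 : mul (SR k) (uL k) (ER k * uR k) =
      mul (SR k) (uL k) (ER k) * mul (SR k) (uL k) (uR k) :=
    hdistl _ _ _ _ (cc_uL k) (cc_ER k) (cc_uR k)
  rw [ER_mul_uR, mulf_one mul hone hdistl (cc_uL k)] at h2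
  have e2 : sG (mul (SR k) (uL k) (ER k)) + sG (mul (SR k) (uL k) (uR k)) = 0 := by
    rw [← sG_mul ccmuluE ccmuluu, ← h2, sG_one]
  have e3 : sG (mul (SR k) (EL k) (ER k)) = sG (mul (SR k) (uL k) (uR k)) := by
    have := congrArg (fun z => z - sG (mul (SR k) (uL k) (ER k))) (e1.trans e2.symm)
    simpa using this
  -- sG of EL in terms of uL
  have e4 : sG (EL k) + sG (uL k) = 0 := by
    rw [← sG_mul (cc_EL k) (cc_uL k), EL_mul_uL, sG_one]
  have e5 : sG (ER k) + sG (uR k) = 0 := by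
    rw [← sG_mul (cc_ER k) (cc_uR k), ER_mul_uR, sG_one]
  -- compute coefficients
  have cL : coeff (n + 1) (sG (uL k)) = ∑ i : Fin k, (-(xiL k i)) ^ (n + 1) := by
    rw [uL, sG_prod Finset.univ _ (fun i _ => ccLs _), map_sum]
    exact Finset.sum_congr rfl fun i _ => coeff_sG_L _ n
  have cR : coeff (n + 1) (sG (uR k)) = ∑ j : Fin k, (-(xiR k j)) ^ (n + 1) := by
    rw [uR, sG_prod Finset.univ _ (fun i _ => ccLs _), map_sum]
    exact Finset.sum_congr rfl fun i _ => coeff_sG_L _ n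
  have cuv : coeff (n + 1) (sG (mul (SR k) (uL k) (uR k))) =
      ∑ i : Fin k, ∑ j : Fin k, (xiL k i * xiR k j) ^ (n + 1) := by
    rw [hmul_uv, sG_prod Finset.univ _ (fun i _ => by
      rw [map_prod]; exact Finset.prod_eq_one fun j _ => ccLs _), map_sum]
    refine Finset.sum_congr rfl fun i _ => ?_
    rw [sG_prod Finset.univ _ (fun j _ => ccLs _), map_sum]
    exact Finset.sum_congr rfl fun j _ => coeff_sG_L _ n
  have hEL' : coeff (n + 1) (sG (EL k)) = -coeff (n + 1) (sG (uL k)) := by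
    have := congrArg (coeff (n + 1)) e4
    rw [map_add, map_zero] at this
    exact eq_neg_of_add_eq_zero_left this
  have hER' : coeff (n + 1) (sG (ER k)) = -coeff (n + 1) (sG (uR k)) := by
    have := congrArg (coeff (n + 1)) e5
    rw [map_add, map_zero] at this
    exact eq_neg_of_add_eq_zero_left this
  rw [congrArg (coeff (n + 1)) e3, cuv, hEL', hER', cL, cR, neg_mul_neg,
    Finset.sum_mul_sum]
  refine Finset.sum_congr rfl fun i _ => Finset.sum_congr rfl fun j _ => ?_
  rw [← mul_pow, neg_mul_neg]

end KeyS

section Universal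

/-- the universal base ring -/
abbrev UR : Type := MvPolynomial (ℕ ⊕ ℕ) ℤ

def fuP : PowerSeries UR := PowerSeries.mk fun m =>
  if m = 0 then 1 else MvPolynomial.X (Sum.inl (m - 1))
def guP : PowerSeries UR := PowerSeries.mk fun m =>
  if m = 0 then 1 else MvPolynomial.X (Sum.inr (m - 1))

lemma cc_fuP : constantCoeff fuP = 1 := by simp [fuP, constantCoeff_mk]
lemma cc_guP : constantCoeff guP = 1 := by simp [guP, constantCoeff_mk]

variable (mul : ∀ (A : Type) [CommRing A], PowerSeries A → PowerSeries A → PowerSeries A)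

lemma universal
    (hone : ∀ (A : Type) [CommRing A] (f g : PowerSeries A),
      constantCoeff f = 1 → constantCoeff g = 1 → constantCoeff (mul A f g) = 1)
    (hfunc : ∀ (A B : Type) [CommRing A] [CommRing B] (φ : A →+* B) (f g : PowerSeries A),
      PowerSeries.map φ (mul A f g) = mul B (PowerSeries.map φ f) (PowerSeries.map φ g))
    (hdistl : ∀ (A : Type) [CommRing A] (f g h : PowerSeries A),
      constantCoeff f = 1 → constantCoeff g = 1 → constantCoeff h = 1 →
      mul A f (g * h) = mul A f g * mul A f h)
    (hdistr : ∀ (A : Type) [CommRing A] (f g h : PowerSeries A),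
      constantCoeff f = 1 → constantCoeff g = 1 → constantCoeff h = 1 →
      mul A (f * g) h = mul A f h * mul A g h)
    (hlin : ∀ (A : Type) [CommRing A] (x y : A),
      mul A (PowerSeries.mk fun m => x ^ m) (PowerSeries.mk fun m => y ^ m) =
        PowerSeries.mk fun m => (x * y) ^ m)
    (n : ℕ) :
    coeff (n + 1) (sG (mul UR fuP guP)) =
      coeff (n + 1) (sG fuP) * coeff (n + 1) (sG guP) := by
  classical
  set D : UR := coeff (n + 1) (sG (mul UR fuP guP)) -
    coeff (n + 1) (sG fuP) * coeff (n + 1) (sG guP) with hD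
  obtain ⟨s, q, hq⟩ := MvPolynomial.exists_finset_rename D
  set k : ℕ := s.sup (Sum.elim id id) + 1 with hk
  have hbound : ∀ v ∈ s, Sum.elim id id v < k := fun v hv =>
    Nat.lt_succ_of_le (Finset.le_sup (f := Sum.elim id id) hv)
  -- the embedding of the variables of D into `Fin k ⊕ Fin k`
  let o : Fin k ⊕ Fin k → ℕ ⊕ ℕ := Sum.map Fin.val Fin.val
  let j : {x // x ∈ s} → Fin k ⊕ Fin k := fun v =>
    match v with
    | ⟨Sum.inl i, hv⟩ => Sum.inl ⟨i, by simpa using hbound _ hv⟩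
    | ⟨Sum.inr i, hv⟩ => Sum.inr ⟨i, by simpa using hbound _ hv⟩
  have hoj : ∀ v : {x // x ∈ s}, o (j v) = v.1 := by
    rintro ⟨(i | i), hv⟩ <;> rfl
  -- the symmetric-function specialization
  let vv : ℕ ⊕ ℕ → SR k := Sum.elim
    (fun i => MvPolynomial.rename Sum.inl (MvPolynomial.esymm (Fin k) ℤ (i + 1)))
    (fun i => MvPolynomial.rename Sum.inr (MvPolynomial.esymm (Fin k) ℤ (i + 1)))
  let φa : UR →ₐ[ℤ] SR k := MvPolynomial.aeval vv
  let φ : UR →+* SR k := φa.toRingHom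
  have hφX : ∀ v, φ (MvPolynomial.X v) = vv v := fun v => MvPolynomial.aeval_X vv v
  have hφfu : PowerSeries.map φ fuP = EL k := by
    refine PowerSeries.ext fun m => ?_
    rw [coeff_map, coeff_EL]
    cases m with
    | zero =>
        simp [fuP, MvPolynomial.esymm_zero]
    | succ m =>
        simp only [fuP, coeff_mk, Nat.succ_ne_zero, if_false, Nat.add_sub_cancel]
        rw [hφX]
        rfl
  have hφgu : PowerSeries.map φ guP = ER k := by
    refine PowerSeries.ext fun m => ?_
    rw [coeff_map, coeff_ER]
    cases m with
    | zero =>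
        simp [guP, MvPolynomial.esymm_zero]
    | succ m =>
        simp only [guP, coeff_mk, Nat.succ_ne_zero, if_false, Nat.add_sub_cancel]
        rw [hφX]
        rfl
  -- φ kills D
  have hφD : φ D = 0 := by
    rw [hD, map_sub, map_mul]
    have t1 : φ (coeff (n + 1) (sG (mul UR fuP guP))) =
        coeff (n + 1) (sG (mul (SR k) (EL k) (ER k))) := by
      rw [← coeff_map, map_sG φ (hone UR fuP guP cc_fuP cc_guP),
        hfunc UR (SR k) φ fuP guP, hφfu, hφgu]
    have t2 : φ (coeff (n + 1) (sG fuP)) = coeff (n + 1) (sG (EL k)) := by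
      rw [← coeff_map, map_sG φ cc_fuP, hφfu]
    have t3 : φ (coeff (n + 1) (sG guP)) = coeff (n + 1) (sG (ER k)) := by
      rw [← coeff_map, map_sG φ cc_guP, hφgu]
    rw [t1, t2, t3, key_S mul hone hdistl hdistr hlin k n, sub_self]
  -- relate φ ∘ rename o with Phi
  have hcomp : (φa.comp (MvPolynomial.rename o)) = Phi k k := by
    apply MvPolynomial.algHom_ext
    rintro (i | i)
    · rw [AlgHom.comp_apply, MvPolynomial.rename_X, Phi_Xl]
      show φ (MvPolynomial.X (o (Sum.inl i))) = _
      rw [hφX]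
      rfl
    · rw [AlgHom.comp_apply, MvPolynomial.rename_X, Phi_Xr]
      show φ (MvPolynomial.X (o (Sum.inr i))) = _
      rw [hφX]
      rfl
  have hDo : D = MvPolynomial.rename o (MvPolynomial.rename j q) := by
    rw [hq, MvPolynomial.rename_rename]
    congr 1
    exact (funext hoj).symm ▸ rfl
  have : Phi k k (MvPolynomial.rename j q) = 0 := by
    rw [← hcomp, AlgHom.comp_apply, ← hDo]
    exact hφD
  have hzero : MvPolynomial.rename j q = 0 := Phi_inj le_rfl (by rw [this, map_zero])
  have : D = 0 := by rw [hDo, hzero, map_zero]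
  exact sub_eq_zero.mp (hD ▸ this)

end Universal

end Stmt13Aux
end Stmt13Aux

/-- Any functorial multiplication on power series with constant term 1 that distributes
over power-series multiplication (= Witt addition) and satisfies
`(1-xt)⁻¹ * (1-yt)⁻¹ = (1-xyt)⁻¹` is, on ghost components
(`s_n(f) = ` the `n`-th coefficient of `t·f'(t)/f(t)`), given by componentwise
multiplication: `s_n(f * g) = s_n(f) · s_n(g)`. -/
theorem stmt13
    (mul : ∀ (A : Type) [CommRing A], PowerSeries A → PowerSeries A → PowerSeries A)
    (hone : ∀ (A : Type) [CommRing A] (f g : PowerSeries A),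
      PowerSeries.constantCoeff f = 1 → PowerSeries.constantCoeff g = 1 →
      PowerSeries.constantCoeff (mul A f g) = 1)
    (hfunc : ∀ (A B : Type) [CommRing A] [CommRing B] (φ : A →+* B) (f g : PowerSeries A),
      PowerSeries.map φ (mul A f g) = mul B (PowerSeries.map φ f) (PowerSeries.map φ g))
    (hdistl : ∀ (A : Type) [CommRing A] (f g h : PowerSeries A),
      PowerSeries.constantCoeff f = 1 → PowerSeries.constantCoeff g = 1 →
      PowerSeries.constantCoeff h = 1 → mul A f (g * h) = mul A f g * mul A f h)
    (hdistr : ∀ (A : Type) [CommRing A] (f g h : PowerSeries A),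
      PowerSeries.constantCoeff f = 1 → PowerSeries.constantCoeff g = 1 →
      PowerSeries.constantCoeff h = 1 → mul A (f * g) h = mul A f h * mul A g h)
    (hlin : ∀ (A : Type) [CommRing A] (x y : A),
      mul A (PowerSeries.mk fun m => x ^ m) (PowerSeries.mk fun m => y ^ m) =
        PowerSeries.mk fun m => (x * y) ^ m)
    (A : Type) [CommRing A] (f g : PowerSeries A)
    (hf : PowerSeries.constantCoeff f = 1) (hg : PowerSeries.constantCoeff g = 1) :
    ∀ n : ℕ,
      PowerSeries.coeff n
          ((PowerSeries.mk fun m => (m : A) * PowerSeries.coeff m (mul A f g)) *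
            PowerSeries.invOfUnit (mul A f g) 1) =
        PowerSeries.coeff n
            ((PowerSeries.mk fun m => (m : A) * PowerSeries.coeff m f) *
              PowerSeries.invOfUnit f 1) *
          PowerSeries.coeff n
            ((PowerSeries.mk fun m => (m : A) * PowerSeries.coeff m g) *
              PowerSeries.invOfUnit g 1) := by
  open Stmt13Aux PowerSeries in
  intro n
  show coeff n (sG (mul A f g)) = coeff n (sG f) * coeff n (sG g)
  cases n with
  | zero => rw [coeff_zero_sG, coeff_zero_sG, coeff_zero_sG, zero_mul]
  | succ n =>
      let ψa : UR →ₐ[ℤ] A := MvPolynomial.aeval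
        (Sum.elim (fun i => coeff (i + 1) f) (fun i => coeff (i + 1) g))
      let ψ : UR →+* A := ψa.toRingHom
      have hc0f : coeff 0 f = 1 := by
        rw [coeff_zero_eq_constantCoeff_apply, hf]
      have hc0g : coeff 0 g = 1 := by
        rw [coeff_zero_eq_constantCoeff_apply, hg]
      have hmf : PowerSeries.map ψ fuP = f := by
        refine PowerSeries.ext fun m => ?_
        rw [coeff_map]
        cases m with
        | zero => simp [fuP, hc0f]
        | succ m =>
            simp only [fuP, coeff_mk, Nat.succ_ne_zero, if_false, Nat.add_sub_cancel]
            rw [show ψ (MvPolynomial.X (Sum.inl m)) = _ from MvPolynomial.aeval_X _ _]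
            rfl
      have hmg : PowerSeries.map ψ guP = g := by
        refine PowerSeries.ext fun m => ?_
        rw [coeff_map]
        cases m with
        | zero => simp [guP, hc0g]
        | succ m =>
            simp only [guP, coeff_mk, Nat.succ_ne_zero, if_false, Nat.add_sub_cancel]
            rw [show ψ (MvPolynomial.X (Sum.inr m)) = _ from MvPolynomial.aeval_X _ _]
            rfl
      have hkey : map ψ (sG (mul UR fuP guP)) = sG (mul A f g) := by
        rw [map_sG ψ (hone UR fuP guP cc_fuP cc_guP), hfunc UR A ψ fuP guP, hmf, hmg]
      have hkeyf : map ψ (sG fuP) = sG f := by rw [map_sG ψ cc_fuP, hmf]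
      have hkeyg : map ψ (sG guP) = sG g := by rw [map_sG ψ cc_guP, hmg]
      calc coeff (n + 1) (sG (mul A f g))
          = ψ (coeff (n + 1) (sG (mul UR fuP guP))) := by rw [← coeff_map, hkey]
        _ = ψ (coeff (n + 1) (sG fuP) * coeff (n + 1) (sG guP)) := by
            rw [universal mul hone hfunc hdistl hdistr hlin n]
        _ = coeff (n + 1) (sG f) * coeff (n + 1) (sG g) := by
            rw [map_mul, ← coeff_map, ← coeff_map, hkeyf, hkeyg]
end

section
/- A sequence of integers (b_1, b_2, ...) lies in the image of the ghost map w: W(ℤ) → ℤ^ℕ if and only if Σ_{d|n} μ(d) b_{n/d} ≡ 0 (mod n) for all n ≥ 1, where μ is the Möbius function. Equivalently, if and only if Σ_{i=1}^{n} b_{(i,n)} ≡ 0 (mod n) for all n, where (i,n) denotes the gcd. -/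
section WittGhost
open Finset Nat ArithmeticFunction
open scoped ArithmeticFunction.Moebius

lemma fermat_int {p : ℕ} (hp : p.Prime) (a : ℤ) : (p:ℤ) ∣ a^p - a := by
  haveI := Fact.mk hp
  have : ((a^p - a : ℤ) : ZMod p) = 0 := by push_cast [ZMod.pow_card]; ring
  exact (ZMod.intCast_zmod_eq_zero_iff_dvd _ _).mp this

lemma pow_pow_sub {p : ℕ} (hp : p.Prime) (k : ℕ) (a : ℤ) :
    (p:ℤ)^(k+1) ∣ a^(p^(k+1)) - a^(p^k) := by
  have h := dvd_sub_pow_of_dvd_sub (fermat_int hp a) k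
  rwa [← pow_mul, ← pow_succ'] at h

-- swap lemma
lemma swap_div_sum {M : Type*} [AddCommMonoid M] (n : ℕ) (F : ℕ → ℕ → M) :
    ∑ d ∈ n.divisors, ∑ e ∈ (n/d).divisors, F d e
      = ∑ e ∈ n.divisors, ∑ d ∈ (n/e).divisors, F d e := by
  have key : ∀ x : Σ _ : ℕ, ℕ, x ∈ n.divisors.sigma (fun d => (n/d).divisors) →
      (⟨x.2, x.1⟩ : Σ _ : ℕ, ℕ) ∈ n.divisors.sigma (fun d => (n/d).divisors) := by
    rintro ⟨d, e⟩ hx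
    simp only [Finset.mem_sigma, Nat.mem_divisors] at hx ⊢
    obtain ⟨⟨hd, hn⟩, he, hnd⟩ := hx
    have hen : e ∣ n := he.trans (Nat.div_dvd_of_dvd hd)
    refine ⟨⟨hen, hn⟩, ?_, ?_⟩
    · rw [Nat.dvd_div_iff_mul_dvd hen, mul_comm]
      exact (Nat.dvd_div_iff_mul_dvd hd).mp he
    · have he0 : 0 < e := Nat.pos_of_ne_zero (by rintro rfl; exact hn (zero_dvd_iff.mp hen))
      exact (Nat.div_pos (Nat.le_of_dvd (Nat.pos_of_ne_zero hn) hen) he0).ne'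
  rw [Finset.sum_sigma', Finset.sum_sigma']
  exact Finset.sum_nbij' (fun x => ⟨x.2, x.1⟩) (fun x => ⟨x.2, x.1⟩) key key
    (fun x _ => rfl) (fun x _ => rfl) (fun x _ => rfl)


lemma necklace_prime {p s : ℕ} (hp : p.Prime) (hs : ¬ p ∣ s) (hs0 : s ≠ 0) (k : ℕ) (x : ℤ) :
    (p:ℤ)^(k+1) ∣ ∑ d ∈ (p^(k+1)*s).divisors, (μ d : ℤ) * x ^ ((p^(k+1)*s)/d) := by
  set n := p^(k+1)*s with hn
  have hn0 : n ≠ 0 := Nat.mul_ne_zero (pow_ne_zero _ hp.pos.ne') hs0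
  have hps : p*s ∣ n := mul_dvd_mul (dvd_pow_self p (Nat.succ_ne_zero k)) dvd_rfl
  have hps0 : p*s ≠ 0 := Nat.mul_ne_zero hp.pos.ne' hs0
  -- restrict to divisors of p*s
  have step1 : ∑ d ∈ n.divisors, (μ d : ℤ) * x ^ (n/d)
      = ∑ d ∈ (p*s).divisors, (μ d : ℤ) * x ^ (n/d) := by
    rw [eq_comm]
    apply Finset.sum_subset (Nat.divisors_subset_of_dvd hn0 hps)
    intro d hd hnd
    have hdn : d ∣ n := Nat.dvd_of_mem_divisors hd
    have hd0 : d ≠ 0 := by rintro rfl; exact hn0 (zero_dvd_iff.mp hdn)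
    have : ¬ Squarefree d := by
      intro hsq
      apply hnd
      rw [Nat.mem_divisors]
      refine ⟨?_, hps0⟩
      -- d squarefree, d ∣ p^(k+1) * s ⇒ d ∣ p * s
      have hj : d.factorization p ≤ 1 := hsq.natFactorization_le_one p
      have hdecomp := Nat.ordProj_mul_ordCompl_eq_self d p
      have hcop : Nat.Coprime ((d / p ^ d.factorization p)) (p^(k+1)) :=
        Nat.Coprime.pow_right _ ((Nat.Prime.coprime_iff_not_dvd hp).mpr (Nat.not_dvd_ordCompl hp hd0)).symm
      have hcompl : (d / p ^ d.factorization p) ∣ s := by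
        have h1 : (d / p ^ d.factorization p) ∣ n := (Nat.ordCompl_dvd d p).trans hdn
        rw [hn, mul_comm] at h1
        exact (Nat.Coprime.dvd_of_dvd_mul_right hcop h1)
      calc d = p ^ d.factorization p * (d / p ^ d.factorization p) := hdecomp.symm
        _ ∣ p^1 * s := mul_dvd_mul (pow_dvd_pow p hj) hcompl
        _ = p * s := by rw [pow_one]
    rw [ArithmeticFunction.moebius_eq_zero_of_not_squarefree this]
    push_cast; ring
  rw [step1]
  -- split divisors (p*s) into p ∤ d (= divisors s) and p ∣ d (= p * divisors s)
  have hfilt1 : (p*s).divisors.filter (fun d => ¬ p ∣ d) = s.divisors := by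
    ext d
    simp only [Finset.mem_filter, Nat.mem_divisors]
    constructor
    · rintro ⟨⟨hd, -⟩, hpd⟩
      refine ⟨?_, hs0⟩
      exact (Nat.Coprime.dvd_of_dvd_mul_left
        ((Nat.Prime.coprime_iff_not_dvd hp).mpr hpd).symm hd)
    · rintro ⟨hd, -⟩
      exact ⟨⟨hd.mul_left p, hps0⟩, fun h => hs (h.trans hd)⟩
  have hfilt2 : (p*s).divisors.filter (fun d => p ∣ d) = s.divisors.image (p * ·) := by
    ext d
    simp only [Finset.mem_filter, Nat.mem_divisors, Finset.mem_image]
    constructor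
    · rintro ⟨⟨hd, -⟩, e, rfl⟩
      exact ⟨e, ⟨(mul_dvd_mul_iff_left hp.pos.ne').mp hd, hs0⟩, rfl⟩
    · rintro ⟨e, ⟨he, -⟩, rfl⟩
      exact ⟨⟨mul_dvd_mul_left p he, hps0⟩, dvd_mul_right p e⟩
  rw [← Finset.sum_filter_add_sum_filter_not (p*s).divisors (fun d => p ∣ d), hfilt1, hfilt2,
    Finset.sum_image (fun a _ b _ h => Nat.eq_of_mul_eq_mul_left hp.pos h)]
  rw [← Finset.sum_add_distrib]
  apply Finset.dvd_sum
  intro e he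
  obtain ⟨hes, -⟩ := Nat.mem_divisors.mp he
  have hpe : ¬ p ∣ e := fun h => hs (h.trans hes)
  have hmu : (μ (p * e) : ℤ) = - μ e := by
    rw [isMultiplicative_moebius.map_mul_of_coprime
      ((Nat.Prime.coprime_iff_not_dvd hp).mpr hpe), moebius_apply_prime hp]
    push_cast; ring
  have hdiv1 : n / e = p^(k+1) * (s / e) := by
    rw [hn, Nat.mul_div_assoc _ hes]
  have hdiv2 : n / (p * e) = p^k * (s / e) := by
    rw [hn, Nat.mul_div_mul_comm (dvd_pow_self p (Nat.succ_ne_zero k)) hes,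
      pow_succ, Nat.mul_div_cancel _ hp.pos]
  rw [hmu, hdiv1, hdiv2]
  have key : (p:ℤ)^(k+1) ∣ x ^ (p^(k+1) * (s/e)) - x ^ (p^k * (s/e)) := by
    have := pow_pow_sub hp k (x ^ (s/e))
    rwa [← pow_mul, ← pow_mul, mul_comm (s/e) (p^(k+1)), mul_comm (s/e) (p^k)] at this
  obtain ⟨c, hc⟩ := key
  exact ⟨μ e * c, by rw [mul_comm ((p:ℤ)^(k+1))]; linear_combination (μ e : ℤ) * hc⟩


lemma necklace (x : ℤ) {n : ℕ} (hn : n ≠ 0) :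
    (n:ℤ) ∣ ∑ d ∈ n.divisors, (μ d : ℤ) * x ^ (n/d) := by
  set S := ∑ d ∈ n.divisors, (μ d : ℤ) * x ^ (n/d) with hS
  have key : ∀ p : ℕ, p.Prime → p ∣ n → (p:ℤ)^(n.factorization p) ∣ S := by
    intro p hp hpn
    have hv : n.factorization p ≠ 0 := (hp.factorization_pos_of_dvd hn hpn).ne'
    obtain ⟨k, hk⟩ : ∃ k, n.factorization p = k + 1 := ⟨n.factorization p - 1, by omega⟩
    have hns : n = p^(k+1) * (n / p ^ n.factorization p) := by
      rw [← hk]; exact (Nat.ordProj_mul_ordCompl_eq_self n p).symm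
    have hs : ¬ p ∣ (n / p ^ n.factorization p) := Nat.not_dvd_ordCompl hp hn
    have hs0 : (n / p ^ n.factorization p) ≠ 0 := (Nat.ordCompl_pos p hn).ne'
    rw [hS, hk, hns]
    exact necklace_prime hp hs hs0 k x
  rcases eq_or_ne S 0 with h0 | h0
  · simp [h0]
  rw [Int.natCast_dvd]
  have hA0 : S.natAbs ≠ 0 := Int.natAbs_ne_zero.mpr h0
  rw [← Nat.factorization_le_iff_dvd hn hA0]
  refine Finsupp.le_def.mpr fun p => ?_
  by_cases hp : p.Prime
  · by_cases hpn : p ∣ n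
    · have hd := key p hp hpn
      rw [show ((p:ℤ) ^ n.factorization p) = ((p ^ n.factorization p : ℕ) : ℤ) by push_cast; ring,
        Int.natCast_dvd] at hd
      exact (Nat.Prime.pow_dvd_iff_le_factorization hp hA0).mp hd
    · simp [Nat.factorization_eq_zero_of_not_dvd hpn]
  · simp [Nat.factorization_eq_zero_of_not_prime _ hp]


lemma mixing (x : ℕ → ℤ) {n : ℕ} (hn : n ≠ 0) :
    (n:ℤ) ∣ ∑ d ∈ n.divisors, (μ d : ℤ) * ∑ e ∈ (n/d).divisors, (e:ℤ) * x e ^ ((n/d)/e) := by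
  have h1 : ∑ d ∈ n.divisors, (μ d : ℤ) * ∑ e ∈ (n/d).divisors, (e:ℤ) * x e ^ ((n/d)/e)
      = ∑ d ∈ n.divisors, ∑ e ∈ (n/d).divisors, (μ d : ℤ) * ((e:ℤ) * x e ^ (n/(d*e))) := by
    refine Finset.sum_congr rfl fun d _ => ?_
    rw [Finset.mul_sum]
    exact Finset.sum_congr rfl fun e _ => by rw [Nat.div_div_eq_div_mul]
  rw [h1, swap_div_sum n (fun d e => (μ d : ℤ) * ((e:ℤ) * x e ^ (n/(d*e))))]
  apply Finset.dvd_sum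
  intro e he
  obtain ⟨hed, -⟩ := Nat.mem_divisors.mp he
  have h2 : ∑ d ∈ (n/e).divisors, (μ d : ℤ) * ((e:ℤ) * x e ^ (n/(d*e)))
      = (e:ℤ) * ∑ d ∈ (n/e).divisors, (μ d : ℤ) * x e ^ ((n/e)/d) := by
    rw [Finset.mul_sum]
    refine Finset.sum_congr rfl fun d _ => ?_
    rw [Nat.div_div_eq_div_mul, mul_comm e d]; ring
  rw [h2]
  have hne : n/e ≠ 0 := (Nat.div_pos (Nat.le_of_dvd (Nat.pos_of_ne_zero hn) hed)
    (Nat.pos_of_ne_zero (by rintro rfl; exact hn (zero_dvd_iff.mp hed)))).ne'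
  have := necklace (x e) hne
  calc (n:ℤ) = (e:ℤ) * ((n/e : ℕ) : ℤ) := by
        rw [← Nat.cast_mul, Nat.mul_div_cancel' hed]
    _ ∣ (e:ℤ) * ∑ d ∈ (n/e).divisors, (μ d : ℤ) * x e ^ ((n/e)/d) := mul_dvd_mul_left _ this

noncomputable def xs (b : ℕ → ℤ) : ℕ → ℤ
  | n => (b n - ∑ d ∈ n.properDivisors.attach,
      (d.1 : ℤ) * xs b d.1 ^ (n / d.1)) / n
decreasing_by exact (Nat.mem_properDivisors.mp d.2).2

lemma xs_eq (b : ℕ → ℤ) (n : ℕ) :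
    xs b n = (b n - ∑ d ∈ n.properDivisors, (d : ℤ) * xs b d ^ (n / d)) / n := by
  rw [xs, Finset.sum_attach n.properDivisors (fun d => (d : ℤ) * xs b d ^ (n / d))]


lemma ghost_to_A (b x : ℕ → ℤ)
    (h : ∀ n : ℕ, 1 ≤ n → ∑ d ∈ Nat.divisors n, (d : ℤ) * x d ^ (n / d) = b n)
    (n : ℕ) (hn : 1 ≤ n) :
    (n : ℤ) ∣ ∑ d ∈ Nat.divisors n, (μ d : ℤ) * b (n / d) := by
  have hn0 : n ≠ 0 := by omega
  have := mixing x hn0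
  convert this using 2 with d hd
  congr 1
  refine (h (n/d) ?_).symm
  have hdn := Nat.dvd_of_mem_divisors hd
  have := Nat.pos_of_mem_divisors hd
  exact Nat.div_pos (Nat.le_of_dvd (by omega) hdn) this

lemma A_to_ghost (b : ℕ → ℤ)
    (hA : ∀ n : ℕ, 1 ≤ n → (n : ℤ) ∣ ∑ d ∈ Nat.divisors n, (μ d : ℤ) * b (n / d)) :
    ∀ n : ℕ, 1 ≤ n → ∑ d ∈ Nat.divisors n, (d : ℤ) * xs b d ^ (n / d) = b n := by
  intro n
  induction n using Nat.strong_induction_on with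
  | _ n IH =>
  intro hn
  have hn0 : n ≠ 0 := by omega
  set S := ∑ d ∈ n.properDivisors, (d : ℤ) * xs b d ^ (n / d) with hSdef
  have hsplit : ∑ d ∈ n.divisors, (d : ℤ) * xs b d ^ (n / d) = S + n * xs b n := by
    rw [← Nat.insert_self_properDivisors hn0, Finset.sum_insert Nat.self_notMem_properDivisors,
      Nat.div_self (by omega), pow_one, hSdef]
    ring
  have hdvd : (n : ℤ) ∣ b n - S := by
    have hM := mixing (xs b) hn0
    have hAn := hA n hn
    -- A_n - M = b n - (S + n * xs b n)
    have key_eq : (∑ d ∈ n.divisors, (μ d : ℤ) * b (n / d))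
        - (∑ d ∈ n.divisors, (μ d : ℤ) * ∑ e ∈ (n/d).divisors, (e:ℤ) * xs b e ^ ((n/d)/e))
        = b n - (S + n * xs b n) := by
      rw [← Finset.sum_sub_distrib]
      have h1 : (1 : ℕ) ∈ n.divisors := Nat.one_mem_divisors.mpr hn0
      rw [← Finset.add_sum_erase _ _ h1]
      have hz : ∑ d ∈ n.divisors.erase 1,
          ((μ d : ℤ) * b (n / d) - (μ d : ℤ) * ∑ e ∈ (n/d).divisors, (e:ℤ) * xs b e ^ ((n/d)/e))
          = 0 := by
        apply Finset.sum_eq_zero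
        intro d hd
        obtain ⟨hd1, hdmem⟩ := Finset.mem_erase.mp hd
        have hddvd := Nat.dvd_of_mem_divisors hdmem
        have hdpos := Nat.pos_of_mem_divisors hdmem
        have hlt : n / d < n := Nat.div_lt_self (by omega) (by omega)
        have hge : 1 ≤ n / d := Nat.div_pos (Nat.le_of_dvd (by omega) hddvd) hdpos
        rw [IH (n/d) hlt hge]
        ring
      rw [hz, add_zero]
      simp only [Nat.div_one, ArithmeticFunction.moebius_apply_one]
      rw [hsplit]
      push_cast
      ring
    have : b n - S = ((∑ d ∈ n.divisors, (μ d : ℤ) * b (n / d))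
        - (∑ d ∈ n.divisors, (μ d : ℤ) * ∑ e ∈ (n/d).divisors, (e:ℤ) * xs b e ^ ((n/d)/e)))
        + n * xs b n := by rw [key_eq]; ring
    rw [this]
    exact dvd_add (dvd_sub hAn hM) ⟨xs b n, rfl⟩
  rw [hsplit, xs_eq b n, Int.mul_ediv_cancel' hdvd]
  ring


-- gcd-sum = totient convolution
lemma gcd_sum_eq (b : ℕ → ℤ) {n : ℕ} (hn : n ≠ 0) :
    ∑ i ∈ Finset.Icc 1 n, b (Nat.gcd i n)
      = ∑ d ∈ n.divisors, ((Nat.totient (n/d) : ℤ)) * b d := by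
  have h1 : ∑ i ∈ Finset.Icc 1 n, b (Nat.gcd i n) = ∑ k ∈ Finset.range n, b (Nat.gcd n k) := by
    have hn1 : 1 ≤ n := by omega
    rw [Finset.range_eq_Ico, Finset.sum_eq_sum_Ico_succ_bot (by omega),
      ← Finset.Ico_add_one_right_eq_Icc, Finset.sum_Ico_succ_top (by omega : 1 ≤ n)]
    simp only [Nat.gcd_zero_right, Nat.gcd_self]
    rw [add_comm]
    congr 1
    exact Finset.sum_congr rfl fun i _ => by rw [Nat.gcd_comm]
  rw [h1, ← Finset.sum_fiberwise_of_maps_to (g := fun k => Nat.gcd n k) (t := n.divisors)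
    (fun k _ => Nat.mem_divisors.mpr ⟨Nat.gcd_dvd_left n k, hn⟩)]
  refine Finset.sum_congr rfl fun d hd => ?_
  have hdn := Nat.dvd_of_mem_divisors hd
  have heq : ∀ k ∈ (Finset.range n).filter (fun i => Nat.gcd n i = d),
      b (Nat.gcd n k) = b d := fun k hk => by rw [(Finset.mem_filter.mp hk).2]
  rw [Finset.sum_congr rfl heq, Finset.sum_const, ← Nat.totient_div_of_dvd hdn,
    nsmul_eq_mul]

-- totient as Möbius convolution with id
lemma phi_eq {m : ℕ} (hm : m ≠ 0) :
    ((Nat.totient m : ℤ)) = ∑ j ∈ m.divisors, (μ j : ℤ) * ((m/j : ℕ) : ℤ) := by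
  have := (ArithmeticFunction.sum_eq_iff_sum_mul_moebius_eq
    (R := ℤ) (f := fun i => (Nat.totient i : ℤ)) (g := fun i => (i : ℤ))).mp ?_ m (by omega)
  · rw [← this, ← Nat.sum_divisorsAntidiagonal (fun j e => (μ j : ℤ) * (e : ℤ))]
    push_cast
    rfl
  · intro n hn
    rw [← Nat.cast_sum]
    norm_cast
    exact Nat.sum_totient n


lemma div_ne_zero' {n d : ℕ} (hn : n ≠ 0) (hd : d ∣ n) : n / d ≠ 0 :=
  (Nat.div_pos (Nat.le_of_dvd (Nat.pos_of_ne_zero hn) hd)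
    (Nat.pos_of_ne_zero (by rintro rfl; exact hn (zero_dvd_iff.mp hd)))).ne'

lemma conv_eq (b : ℕ → ℤ) {n : ℕ} (hn : n ≠ 0) :
    ∑ d ∈ n.divisors, ((Nat.totient (n/d) : ℤ)) * b d
      = ∑ j ∈ n.divisors, (j : ℤ) * ∑ u ∈ (n/j).divisors, (μ u : ℤ) * b ((n/j)/u) := by
  have hL : ∑ d ∈ n.divisors, ((Nat.totient (n/d) : ℤ)) * b d
      = ∑ d ∈ n.divisors, ∑ j ∈ (n/d).divisors, (μ j : ℤ) * ((n/(d*j) : ℕ) : ℤ) * b d := by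
    refine Finset.sum_congr rfl fun d hd => ?_
    rw [phi_eq (div_ne_zero' hn (Nat.dvd_of_mem_divisors hd)), Finset.sum_mul]
    exact Finset.sum_congr rfl fun j _ => by rw [Nat.div_div_eq_div_mul]
  have hR : ∑ j ∈ n.divisors, (j : ℤ) * ∑ u ∈ (n/j).divisors, (μ u : ℤ) * b ((n/j)/u)
      = ∑ j ∈ n.divisors, ∑ u ∈ (n/j).divisors, (u : ℤ) * (μ j : ℤ) * b (n/(j*u)) := by
    rw [swap_div_sum n (fun j u => (u : ℤ) * (μ j : ℤ) * b (n/(j*u)))]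
    refine Finset.sum_congr rfl fun j hj => ?_
    rw [Finset.mul_sum]
    refine Finset.sum_congr rfl fun u hu => ?_
    rw [Nat.div_div_eq_div_mul, mul_comm u j]
    ring
  rw [hL, hR, swap_div_sum n (fun d j => (μ j : ℤ) * ((n/(d*j) : ℕ) : ℤ) * b d)]
  refine Finset.sum_congr rfl fun j hj => ?_
  -- fixed j, m := n/j
  have hm : ∀ d u : ℕ, n / (d * j) = (n/j)/d ∧ n/(j*u) = (n/j)/u := by
    intro d u
    constructor
    · rw [Nat.div_div_eq_div_mul, mul_comm j d]
    · rw [Nat.div_div_eq_div_mul]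
  set m := n / j with hmdef
  have e1 : ∑ d ∈ m.divisors, (μ j : ℤ) * ((n/(d*j) : ℕ) : ℤ) * b d
      = (μ j : ℤ) * ∑ d ∈ m.divisors, ((m/d : ℕ) : ℤ) * b d := by
    rw [Finset.mul_sum]
    refine Finset.sum_congr rfl fun d _ => ?_
    rw [(hm d 0).1]; ring
  have e2 : ∑ u ∈ m.divisors, (u : ℤ) * (μ j : ℤ) * b (n/(j*u))
      = (μ j : ℤ) * ∑ u ∈ m.divisors, (u : ℤ) * b (m/u) := by
    rw [Finset.mul_sum]
    refine Finset.sum_congr rfl fun u _ => ?_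
    rw [(hm 0 u).2]; ring
  rw [e1, e2]
  congr 1
  rw [← Nat.sum_divisorsAntidiagonal' (fun a c => (a : ℤ) * b c),
    Nat.sum_divisorsAntidiagonal (fun a c => (a : ℤ) * b c)]


lemma A_iff_B (b : ℕ → ℤ) :
    (∀ n : ℕ, 1 ≤ n → (n : ℤ) ∣ ∑ d ∈ Nat.divisors n, (μ d : ℤ) * b (n / d)) ↔
    (∀ n : ℕ, 1 ≤ n → (n : ℤ) ∣ ∑ i ∈ Finset.Icc 1 n, b (Nat.gcd i n)) := by
  constructor
  · intro hA n hn
    have hn0 : n ≠ 0 := by omega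
    rw [gcd_sum_eq b hn0, conv_eq b hn0]
    apply Finset.dvd_sum
    intro j hj
    have hjd := Nat.dvd_of_mem_divisors hj
    have hnj : n / j ≠ 0 := div_ne_zero' hn0 hjd
    calc (n : ℤ) = (j : ℤ) * ((n/j : ℕ) : ℤ) := by
          rw [← Nat.cast_mul, Nat.mul_div_cancel' hjd]
      _ ∣ (j : ℤ) * ∑ u ∈ (n/j).divisors, (μ u : ℤ) * b ((n/j)/u) :=
          mul_dvd_mul_left _ (hA (n/j) (Nat.pos_of_ne_zero hnj))
  · intro hB n
    induction n using Nat.strong_induction_on with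
    | _ n IH =>
    intro hn
    have hn0 : n ≠ 0 := by omega
    have hT : (n : ℤ) ∣ ∑ j ∈ n.divisors, (j : ℤ) * ∑ u ∈ (n/j).divisors,
        (μ u : ℤ) * b ((n/j)/u) := by
      rw [← conv_eq b hn0, ← gcd_sum_eq b hn0]
      exact hB n hn
    have h1 : (1 : ℕ) ∈ n.divisors := Nat.one_mem_divisors.mpr hn0
    rw [← Finset.add_sum_erase _ _ h1] at hT
    simp only [Nat.cast_one, one_mul, Nat.div_one] at hT
    have herase : (n : ℤ) ∣ ∑ j ∈ n.divisors.erase 1, (j : ℤ) * ∑ u ∈ (n/j).divisors,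
        (μ u : ℤ) * b ((n/j)/u) := by
      apply Finset.dvd_sum
      intro j hj
      obtain ⟨hj1, hjmem⟩ := Finset.mem_erase.mp hj
      have hjd := Nat.dvd_of_mem_divisors hjmem
      have hjpos := Nat.pos_of_mem_divisors hjmem
      have hlt : n / j < n := Nat.div_lt_self (by omega) (by omega)
      have hge : 1 ≤ n / j := Nat.pos_of_ne_zero (div_ne_zero' hn0 hjd)
      calc (n : ℤ) = (j : ℤ) * ((n/j : ℕ) : ℤ) := by
            rw [← Nat.cast_mul, Nat.mul_div_cancel' hjd]
        _ ∣ (j : ℤ) * ∑ u ∈ (n/j).divisors, (μ u : ℤ) * b ((n/j)/u) :=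
            mul_dvd_mul_left _ (IH (n/j) hlt hge)
    have := dvd_sub hT herase
    simpa using this

/-- A sequence of integers `b` lies in the image of the ghost map `w : W(ℤ) → ℤ^ℕ` iff
`Σ_{d∣n} μ(d) b_{n/d} ≡ 0 (mod n)` for all `n ≥ 1`, and equivalently iff
`Σ_{i=1}^n b_{gcd(i,n)} ≡ 0 (mod n)` for all `n ≥ 1`. -/
theorem stmt16 (b : ℕ → ℤ) :
    ((∃ x : ℕ → ℤ, ∀ n : ℕ, 1 ≤ n →
        ∑ d ∈ Nat.divisors n, (d : ℤ) * x d ^ (n / d) = b n) ↔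
      ∀ n : ℕ, 1 ≤ n →
        (n : ℤ) ∣ ∑ d ∈ Nat.divisors n, ArithmeticFunction.moebius d * b (n / d)) ∧
    ((∃ x : ℕ → ℤ, ∀ n : ℕ, 1 ≤ n →
        ∑ d ∈ Nat.divisors n, (d : ℤ) * x d ^ (n / d) = b n) ↔
      ∀ n : ℕ, 1 ≤ n →
        (n : ℤ) ∣ ∑ i ∈ Finset.Icc 1 n, b (Nat.gcd i n)) := by
  have hAiff : (∃ x : ℕ → ℤ, ∀ n : ℕ, 1 ≤ n →
        ∑ d ∈ Nat.divisors n, (d : ℤ) * x d ^ (n / d) = b n) ↔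
      (∀ n : ℕ, 1 ≤ n →
        (n : ℤ) ∣ ∑ d ∈ Nat.divisors n, (μ d : ℤ) * b (n / d)) :=
    ⟨fun ⟨x, hx⟩ n hn => ghost_to_A b x hx n hn, fun hA => ⟨xs b, A_to_ghost b hA⟩⟩
  exact ⟨hAiff, hAiff.trans (A_iff_B b)⟩

end WittGhost
end

section
/- (Sum of homothety operators / Teichmüller addition) Let r_d(X,Y) be the integer-coefficient polynomials determined by (1 - Xt)(1 - Yt) = Π_{d≥1} (1 - r_d(X,Y) t^d), equivalently by X^n + Y^n = Σ_{d|n} d · r_d(X,Y)^{n/d} for all n ≥ 1. Then r_1(X,Y) = X + Y, r_2(X,Y) = -XY, and for the homothety operators ⟨u⟩a(t) = a(ut) on Λ(A) one has ⟨u⟩ + ⟨v⟩ = Σ_{n≥1} V_n ⟨r_n(u,v)⟩ f_n as additive operations. -/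
/-- The Verschiebung operator on `Λ(A) = 1 + tA⟦t⟧`: `V_k a(t) = a(t^k)`, written out on
coefficients. -/
noncomputable def Vop (A : Type) [CommRing A] (k : ℕ) (g : PowerSeries A) :
    PowerSeries A :=
  PowerSeries.mk fun r => if k ∣ r then PowerSeries.coeff (r / k) g else 0

open PowerSeries

variable {A : Type} [CommRing A]

/-- `D f = t f'`. -/
noncomputable def Dop (A : Type) [CommRing A] (f : PowerSeries A) : PowerSeries A :=
  PowerSeries.mk fun m => (m : A) * PowerSeries.coeff m f

/-- ghost series `t f'/f`. -/
noncomputable def gh (A : Type) [CommRing A] (f : PowerSeries A) : PowerSeries A :=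
  Dop A f * PowerSeries.invOfUnit f 1

lemma mul_inv_one {f : PowerSeries A} (hf : constantCoeff f = 1) :
    f * invOfUnit f 1 = 1 :=
  PowerSeries.mul_invOfUnit f 1 (by simpa using hf)

lemma invUnique {f g h : PowerSeries A} (hg : f * g = 1) (hh : f * h = 1) : g = h := by
  calc g = g * (f * h) := by rw [hh, mul_one]
  _ = (f * g) * h := by ring
  _ = h := by rw [hg, one_mul]

lemma invOfUnit_mul_eq {f h : PowerSeries A} (hf : constantCoeff f = 1)
    (hh : constantCoeff h = 1) :
    invOfUnit (f * h) 1 = invOfUnit f 1 * invOfUnit h 1 := by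
  refine invUnique (mul_inv_one (by simp [map_mul, hf, hh])) ?_
  calc f * h * (invOfUnit f 1 * invOfUnit h 1)
      = (f * invOfUnit f 1) * (h * invOfUnit h 1) := by ring
  _ = 1 := by rw [mul_inv_one hf, mul_inv_one hh, mul_one]

lemma Dop_mul (f h : PowerSeries A) :
    Dop A (f * h) = Dop A f * h + f * Dop A h := by
  ext n
  simp only [Dop, map_add, coeff_mk, coeff_mul, Finset.mul_sum, ← Finset.sum_add_distrib]
  refine Finset.sum_congr rfl fun p hp => ?_
  rw [Finset.HasAntidiagonal.mem_antidiagonal] at hp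
  have : ((n : A)) = (p.1 : A) + (p.2 : A) := by
    rw [← Nat.cast_add, hp]
  rw [this]; ring

lemma gh_mul {f h : PowerSeries A} (hf : constantCoeff f = 1)
    (hh : constantCoeff h = 1) :
    gh A (f * h) = gh A f + gh A h := by
  unfold gh
  rw [Dop_mul, invOfUnit_mul_eq hf hh]
  have e1 : f * invOfUnit f 1 = 1 := mul_inv_one hf
  have e2 : h * invOfUnit h 1 = 1 := mul_inv_one hh
  linear_combination (Dop A f * invOfUnit f 1) * e2 + (Dop A h * invOfUnit h 1) * e1

lemma gh_one : gh A 1 = 0 := by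
  have : Dop A 1 = 0 := by
    ext n; simp only [Dop, coeff_mk, coeff_one, map_zero]
    split <;> simp_all
  simp [gh, this]

lemma gh_prod {ι : Type*} (s : Finset ι) (g : ι → PowerSeries A)
    (hg : ∀ i ∈ s, constantCoeff (g i) = 1) :
    gh A (∏ i ∈ s, g i) = ∑ i ∈ s, gh A (g i) := by
  induction s using Finset.cons_induction with
  | empty => simpa using gh_one
  | cons a s ha ih =>
    rw [Finset.prod_cons, Finset.sum_cons,
      gh_mul (hg a (Finset.mem_cons_self a s)) (by
        rw [map_prod]; exact Finset.prod_eq_one fun i hi => hg i (Finset.mem_cons_of_mem hi)),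
      ih fun i hi => hg i (Finset.mem_cons_of_mem hi)]

lemma gh_mul_self {f : PowerSeries A} (hf : constantCoeff f = 1) :
    gh A f * f = Dop A f := by
  unfold gh
  calc Dop A f * invOfUnit f 1 * f = Dop A f * (f * invOfUnit f 1) := by ring
  _ = Dop A f := by rw [mul_inv_one hf, mul_one]

lemma coeff_zero_gh {f : PowerSeries A} : coeff 0 (gh A f) = 0 := by
  simp [gh, coeff_mul, Dop]

lemma constantCoeff_rescale' (c : A) (f : PowerSeries A) :
    constantCoeff (rescale c f) = constantCoeff f := by
  rw [← coeff_zero_eq_constantCoeff_apply, ← coeff_zero_eq_constantCoeff_apply,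
    coeff_rescale]
  simp

lemma Dop_rescale (c : A) (f : PowerSeries A) :
    Dop A (rescale c f) = rescale c (Dop A f) := by
  ext n; simp only [Dop, coeff_mk, coeff_rescale]; ring

lemma invOfUnit_rescale {f : PowerSeries A} (c : A) (hf : constantCoeff f = 1) :
    invOfUnit (rescale c f) 1 = rescale c (invOfUnit f 1) := by
  refine invUnique (mul_inv_one (by rw [constantCoeff_rescale', hf])) ?_
  rw [← map_mul, mul_inv_one hf, map_one]

lemma gh_rescale {f : PowerSeries A} (c : A) (hf : constantCoeff f = 1) :
    gh A (rescale c f) = rescale c (gh A f) := by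
  rw [gh, Dop_rescale, invOfUnit_rescale c hf, ← map_mul]; rfl

lemma coeff_Vop (k r : ℕ) (f : PowerSeries A) :
    coeff r (Vop A k f) = if k ∣ r then coeff (r / k) f else 0 := by
  simp [Vop]

lemma constantCoeff_Vop (k : ℕ) (f : PowerSeries A) :
    constantCoeff (Vop A k f) = constantCoeff f := by
  rw [← coeff_zero_eq_constantCoeff_apply, coeff_Vop]
  simp

lemma Vop_one_op (f : PowerSeries A) : Vop A 1 f = f := by
  ext r; simp [coeff_Vop]

lemma Vop_one (k : ℕ) (hk : k ≠ 0) : Vop A k 1 = 1 := by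
  ext r
  rw [coeff_Vop]
  by_cases hd : k ∣ r
  · rw [if_pos hd]
    obtain ⟨c, rfl⟩ := hd
    rw [Nat.mul_div_cancel_left _ (Nat.pos_of_ne_zero hk), coeff_one, coeff_one]
    by_cases hc : c = 0
    · subst hc; simp
    · rw [if_neg hc, if_neg (by simp [hk, hc])]
  · rw [if_neg hd, coeff_one, if_neg (by rintro rfl; exact hd (dvd_zero k))]

lemma Vop_mul (k : ℕ) (hk : k ≠ 0) (f g : PowerSeries A) :
    Vop A k (f * g) = Vop A k f * Vop A k g := by
  ext r
  have hsum : ∀ p : ℕ × ℕ, p ∈ Finset.HasAntidiagonal.antidiagonal r →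
      coeff p.1 (Vop A k f) * coeff p.2 (Vop A k g) =
        if k ∣ p.1 ∧ k ∣ p.2 then coeff (p.1/k) f * coeff (p.2/k) g else 0 := by
    intro p _
    rw [coeff_Vop, coeff_Vop]
    by_cases h1 : k ∣ p.1 <;> by_cases h2 : k ∣ p.2 <;> simp [h1, h2]
  have hR : coeff r (Vop A k f * Vop A k g) =
      ∑ p ∈ Finset.HasAntidiagonal.antidiagonal r,
        (if k ∣ p.1 ∧ k ∣ p.2 then coeff (p.1/k) f * coeff (p.2/k) g else 0) := by
    rw [coeff_mul]; exact Finset.sum_congr rfl hsum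
  rw [coeff_Vop, hR]
  by_cases hd : k ∣ r
  · obtain ⟨s, rfl⟩ := hd
    simp only [dvd_mul_right, if_true]
    rw [Nat.mul_div_cancel_left _ (Nat.pos_of_ne_zero hk), coeff_mul,
      ← Finset.sum_filter]
    have hset : (Finset.HasAntidiagonal.antidiagonal (k * s)).filter (fun p => k ∣ p.1 ∧ k ∣ p.2) =
        (Finset.HasAntidiagonal.antidiagonal s).map
          ⟨fun p => (k * p.1, k * p.2), by
            intro a b hab
            simp only [Prod.mk.injEq] at hab
            exact Prod.ext (Nat.eq_of_mul_eq_mul_left (Nat.pos_of_ne_zero hk) hab.1)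
              (Nat.eq_of_mul_eq_mul_left (Nat.pos_of_ne_zero hk) hab.2)⟩ := by
      ext p
      simp only [Finset.mem_filter, Finset.HasAntidiagonal.mem_antidiagonal, Finset.mem_map,
        Function.Embedding.coeFn_mk]
      constructor
      · rintro ⟨hsum', ⟨c, hc⟩, ⟨d, hd'⟩⟩
        refine ⟨(c, d), ?_, ?_⟩
        · have : k * c + k * d = k * s := by rw [← hc, ← hd', hsum']
          simpa using Nat.eq_of_mul_eq_mul_left (Nat.pos_of_ne_zero hk)
            (by rw [← Nat.mul_add] at this; exact this)
        · exact Prod.ext hc.symm hd'.symm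
      · rintro ⟨q, hq, rfl⟩
        refine ⟨by show k * q.1 + k * q.2 = k * s; rw [← Nat.mul_add, hq], ⟨q.1, rfl⟩, ⟨q.2, rfl⟩⟩
    rw [hset]
    rw [Finset.sum_map _ _ (fun p : ℕ × ℕ => coeff (p.1 / k) f * coeff (p.2 / k) g)]
    refine Finset.sum_congr rfl fun q _ => ?_
    show coeff q.1 f * coeff q.2 g = coeff (k * q.1 / k) f * coeff (k * q.2 / k) g
    simp [Nat.mul_div_cancel_left _ (Nat.pos_of_ne_zero hk)]
  · rw [if_neg hd]
    symm
    refine Finset.sum_eq_zero fun p hp => ?_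
    rw [Finset.HasAntidiagonal.mem_antidiagonal] at hp
    have : ¬(k ∣ p.1 ∧ k ∣ p.2) := by
      rintro ⟨h1, h2⟩; exact hd (hp ▸ Nat.dvd_add h1 h2)
    simp [this]

lemma invOfUnit_Vop {f : PowerSeries A} (k : ℕ) (hk : k ≠ 0)
    (hf : constantCoeff f = 1) :
    invOfUnit (Vop A k f) 1 = Vop A k (invOfUnit f 1) := by
  refine invUnique (mul_inv_one (by rw [constantCoeff_Vop, hf])) ?_
  rw [← Vop_mul k hk, mul_inv_one hf, Vop_one k hk]

lemma Dop_Vop (k : ℕ) (f : PowerSeries A) :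
    Dop A (Vop A k f) = C (k : A) * Vop A k (Dop A f) := by
  ext r
  rw [Dop, coeff_mk, coeff_C_mul, coeff_Vop, coeff_Vop]
  by_cases hd : k ∣ r
  · obtain ⟨s, rfl⟩ := hd
    rcases Nat.eq_zero_or_pos k with rfl | hk
    · simp [Dop]
    · rw [if_pos ⟨s, rfl⟩, if_pos ⟨s, rfl⟩, Nat.mul_div_cancel_left _ hk, Dop, coeff_mk]
      push_cast; ring
  · simp [hd]

lemma gh_Vop {f : PowerSeries A} (k : ℕ) (hk : k ≠ 0) (hf : constantCoeff f = 1) :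
    gh A (Vop A k f) = C (k : A) * Vop A k (gh A f) := by
  rw [gh, Dop_Vop, invOfUnit_Vop k hk hf, mul_assoc, ← Vop_mul k hk]; rfl

lemma invOfUnit_oneSubX : invOfUnit (1 - X : PowerSeries A) 1 = mk fun _ => 1 := by
  refine invUnique
    (mul_inv_one (by simp)) ?_
  ext n
  rw [sub_mul, one_mul, map_sub, coeff_one]
  cases n with
  | zero => simp [coeff_zero_X_mul]
  | succ m => simp [coeff_succ_X_mul]

lemma gh_oneSubX :
    gh A (1 - X) = mk fun n => if n = 0 then 0 else -1 := by
  have hD : Dop A (1 - X) = mk fun i => if i = 1 then (-1 : A) else 0 := by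
    ext i
    simp only [Dop, coeff_mk, map_sub, coeff_one, coeff_X]
    rcases i with _ | _ | i <;> simp
  rw [gh, hD, invOfUnit_oneSubX]
  ext n
  rw [coeff_mul, Finset.Nat.sum_antidiagonal_eq_sum_range_succ_mk]
  simp only [coeff_mk, mul_one]
  rw [Finset.sum_ite_eq' (Finset.range (n + 1)) 1 (fun _ => (-1 : A))]
  simp only [Finset.mem_range]
  rcases Nat.eq_zero_or_pos n with rfl | hn
  · simp
  · rw [if_pos (by omega), if_neg hn.ne']

/-- The basic factor `1 - c t^d`. -/
noncomputable def Efac (A : Type) [CommRing A] (d : ℕ) (c : A) : PowerSeries A :=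
  Vop A d (rescale c (1 - X))

lemma coeff_Efac (d : ℕ) (hd : d ≠ 0) (c : A) (j : ℕ) :
    coeff j (Efac A d c) = if j = 0 then 1 else if j = d then -c else 0 := by
  rw [Efac, coeff_Vop]
  by_cases hj : d ∣ j
  · rw [if_pos hj, coeff_rescale]
    obtain ⟨e, rfl⟩ := hj
    rw [Nat.mul_div_cancel_left _ (Nat.pos_of_ne_zero hd)]
    rcases e with _ | _ | e
    · simp
    · have h1 : d * 1 ≠ 0 := by simpa using hd
      rw [if_neg h1, if_pos (by ring), map_sub, coeff_one, coeff_X]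
      simp
    · have h1 : d * (e + 2) ≠ 0 := by positivity
      have h2 : d * (e + 2) ≠ d := by
        intro h; nlinarith [Nat.pos_of_ne_zero hd]
      rw [if_neg h1, if_neg h2, map_sub, coeff_one, coeff_X]
      simp
  · have h1 : j ≠ 0 := by rintro rfl; exact hj (dvd_zero d)
    have h2 : j ≠ d := by rintro rfl; exact hj dvd_rfl
    rw [if_neg hj, if_neg h1, if_neg h2]

lemma constantCoeff_Efac (d : ℕ) (c : A) :
    constantCoeff (Efac A d c) = 1 := by
  rw [Efac, constantCoeff_Vop, constantCoeff_rescale']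
  simp

lemma coeff_gh_Efac (d : ℕ) (hd : d ≠ 0) (c : A) (n : ℕ) :
    coeff n (gh A (Efac A d c)) =
      if d ∣ n ∧ n ≠ 0 then -((d : A) * c ^ (n / d)) else 0 := by
  rw [Efac, gh_Vop d hd (by rw [constantCoeff_rescale']; simp),
    gh_rescale c (by simp), gh_oneSubX, coeff_C_mul, coeff_Vop]
  by_cases hj : d ∣ n
  · rw [if_pos hj, coeff_rescale, coeff_mk]
    rcases Nat.eq_zero_or_pos n with rfl | hn
    · simp
    · have : n / d ≠ 0 := by
        have h1 := Nat.le_of_dvd hn hj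
        have h2 := Nat.div_pos h1 (Nat.pos_of_ne_zero hd)
        omega
      rw [if_neg this, if_pos ⟨hj, hn.ne'⟩]
      ring
  · rw [if_neg hj, if_neg (by tauto)]
    simp

lemma ghost_key {f : PowerSeries A} (hf : constantCoeff f = 1) (j : ℕ) :
    (j : A) * coeff j f =
      ∑ p ∈ Finset.HasAntidiagonal.antidiagonal j, coeff p.1 (gh A f) * coeff p.2 f := by
  have h1 : coeff j (gh A f * f) = (j : A) * coeff j f := by
    rw [gh_mul_self hf]; simp [Dop]
  rw [← h1, coeff_mul]

lemma ghost_determines {f h : PowerSeries A}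
    (hcan : ∀ n : ℕ, n ≠ 0 → ∀ x y : A, (n : A) * x = (n : A) * y → x = y)
    (hf : constantCoeff f = 1) (hh : constantCoeff h = 1) (N : ℕ)
    (hgh : ∀ i ≤ N, coeff i (gh A f) = coeff i (gh A h)) :
    ∀ j ≤ N, coeff j f = coeff j h := by
  intro j
  induction j using Nat.strong_induction_on with
  | _ j ih =>
    intro hjN
    rcases Nat.eq_zero_or_pos j with rfl | hj
    · simp only [coeff_zero_eq_constantCoeff, hf, hh]
    · refine hcan j hj.ne' _ _ ?_
      rw [ghost_key hf, ghost_key hh]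
      refine Finset.sum_congr rfl fun p hp => ?_
      rw [Finset.HasAntidiagonal.mem_antidiagonal] at hp
      rcases Nat.lt_or_ge p.2 j with h2 | h2
      · rw [hgh p.1 (by omega), ih p.2 h2 (by omega)]
      · have hp2 : p.2 = j := by omega
        have hp1 : p.1 = 0 := by omega
        rw [hp1, coeff_zero_gh, coeff_zero_gh, zero_mul, zero_mul]

lemma coeff_determines_ghost {f h : PowerSeries A}
    (hf : constantCoeff f = 1) (hh : constantCoeff h = 1) (N : ℕ)
    (hco : ∀ i ≤ N, coeff i f = coeff i h) :
    ∀ j ≤ N, coeff j (gh A f) = coeff j (gh A h) := by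
  intro j
  induction j using Nat.strong_induction_on with
  | _ j ih =>
    intro hjN
    have key : ∀ (g : PowerSeries A), constantCoeff g = 1 →
        coeff j (gh A g) = (j : A) * coeff j g -
          ∑ p ∈ (Finset.HasAntidiagonal.antidiagonal j).erase (j, 0),
            coeff p.1 (gh A g) * coeff p.2 g := by
      intro g hg
      have h1 := ghost_key hg j
      have hmem : (j, 0) ∈ Finset.HasAntidiagonal.antidiagonal j := by
        rw [Finset.HasAntidiagonal.mem_antidiagonal]; simp
      rw [← Finset.add_sum_erase _ _ hmem] at h1
      have h2 : coeff (j, 0).2 g = 1 := by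
        simpa [coeff_zero_eq_constantCoeff] using hg
      rw [h2, mul_one] at h1
      linear_combination -h1
    rw [key f hf, key h hh, hco j hjN]
    congr 1
    refine Finset.sum_congr rfl fun p hp => ?_
    rw [Finset.mem_erase, Finset.HasAntidiagonal.mem_antidiagonal] at hp
    have hp1 : p.1 < j := by
      rcases Nat.lt_or_ge p.1 j with h' | h'
      · exact h'
      · exfalso
        have : p.1 = j := by omega
        exact hp.1 (Prod.ext this (by omega))
    rw [ih p.1 hp1 (by omega), hco p.2 (by omega)]

lemma coeff_mul_Efac {d : ℕ} (hd : d ≠ 0) (c : A) (g : PowerSeries A) {j : ℕ}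
    (hj : j ≤ d) :
    coeff j (g * Efac A d c) =
      coeff j g + (if j = d then -c * constantCoeff g else 0) := by
  rw [coeff_mul, Finset.Nat.sum_antidiagonal_eq_sum_range_succ_mk]
  rcases eq_or_lt_of_le hj with rfl | hjd
  · have hterm : ∀ i ∈ Finset.range (j + 1),
        coeff i g * coeff (j - i) (Efac A j c) =
          (if i = j then coeff i g else 0) +
            (if i = 0 then -c * coeff i g else 0) := by
      intro i hi
      rw [Finset.mem_range] at hi
      rw [coeff_Efac j hd]
      rcases eq_or_ne i j with rfl | hij
      · rw [if_pos (by omega), if_pos rfl, if_neg hd]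
        simp [hd]
      · have h1 : j - i ≠ 0 := by omega
        have h2 : i ≤ j := by omega
        rcases eq_or_ne i 0 with rfl | hi0
        · rw [if_neg h1, if_pos (by omega), if_neg hij, if_pos rfl]
          ring
        · rw [if_neg h1, if_neg (by omega), if_neg hij, if_neg hi0]
          ring
    rw [Finset.sum_congr rfl hterm, Finset.sum_add_distrib,
      Finset.sum_ite_eq' (Finset.range (j + 1)) j, Finset.sum_ite_eq' (Finset.range (j + 1)) 0]
    simp [coeff_zero_eq_constantCoeff, mul_comm]
  · have hterm : ∀ i ∈ Finset.range (j + 1),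
        coeff i g * coeff (j - i) (Efac A d c) =
          (if i = j then coeff i g else 0) := by
      intro i hi
      rw [Finset.mem_range] at hi
      rw [coeff_Efac d hd]
      rcases eq_or_ne i j with rfl | hij
      · rw [if_pos (by omega), if_pos rfl]; ring
      · rw [if_neg (by omega), if_neg (by omega), if_neg hij]; ring
    rw [Finset.sum_congr rfl hterm,
      Finset.sum_ite_eq' (Finset.range (j + 1)) j]
    rw [if_neg hjd.ne, add_zero, if_pos (by simp)]

abbrev Spoly : Type := MvPolynomial (Fin 2) ℤ

/-- The universal series `(1 - X₀ t)(1 - X₁ t)`. -/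
noncomputable def fS : PowerSeries Spoly :=
  Efac Spoly 1 (MvPolynomial.X 0) * Efac Spoly 1 (MvPolynomial.X 1)

lemma constantCoeff_fS : constantCoeff fS = 1 := by
  rw [fS, map_mul, constantCoeff_Efac, constantCoeff_Efac, mul_one]

/-- Partial products of the factorization `(1-X₀t)(1-X₁t) = ∏ (1 - r_d t^d)`. -/
noncomputable def Pseq : ℕ → PowerSeries Spoly
  | 0 => 1
  | n + 1 =>
    Pseq n * Efac Spoly (n + 1)
      (-(PowerSeries.coeff (n + 1) (fS * PowerSeries.invOfUnit (Pseq n) 1)))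

/-- The universal coefficients `r_d`. -/
noncomputable def bS : ℕ → Spoly
  | 0 => 0
  | n + 1 => -(PowerSeries.coeff (n + 1) (fS * PowerSeries.invOfUnit (Pseq n) 1))

lemma Pseq_succ (n : ℕ) : Pseq (n + 1) = Pseq n * Efac Spoly (n + 1) (bS (n + 1)) := rfl

lemma constantCoeff_Pseq (n : ℕ) : constantCoeff (Pseq n) = 1 := by
  induction n with
  | zero => simp [Pseq]
  | succ n ih => rw [Pseq_succ, map_mul, ih, constantCoeff_Efac, mul_one]

lemma Pseq_eq_prod (n : ℕ) :
    Pseq n = ∏ d ∈ Finset.Icc 1 n, Efac Spoly d (bS d) := by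
  induction n with
  | zero => simp [Pseq]
  | succ n ih =>
    rw [Pseq_succ, ih, Finset.prod_Icc_succ_top (by omega)]

lemma approx : ∀ n, ∀ j ≤ n, coeff j fS = coeff j (Pseq n) := by
  intro n
  induction n with
  | zero =>
    intro j hj
    interval_cases j
    rw [coeff_zero_eq_constantCoeff_apply, coeff_zero_eq_constantCoeff_apply,
      constantCoeff_fS]
    simp [Pseq]
  | succ n ih =>
    intro j hj
    rcases Nat.lt_or_ge j (n + 1) with hlt | hge
    · rw [ih j (by omega), Pseq_succ,
        coeff_mul_Efac (by omega) _ _ (le_of_lt hlt), if_neg hlt.ne, add_zero]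
    · have hj' : j = n + 1 := by omega
      subst hj'
      -- key computation at level n+1
      have hq : ∀ i ≤ n, coeff i (fS * invOfUnit (Pseq n) 1) = coeff i 1 := by
        intro i hi
        have hdiff : fS * invOfUnit (Pseq n) 1 - 1 =
            (fS - Pseq n) * invOfUnit (Pseq n) 1 := by
          rw [sub_mul]
          congr 1
          exact (mul_inv_one (constantCoeff_Pseq n)).symm
        have hz : coeff i ((fS - Pseq n) * invOfUnit (Pseq n) 1) = 0 := by
          rw [coeff_mul]
          refine Finset.sum_eq_zero fun p hp => ?_
          rw [Finset.HasAntidiagonal.mem_antidiagonal] at hp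
          have : coeff p.1 (fS - Pseq n) = 0 := by
            rw [map_sub, ih p.1 (by omega), sub_self]
          rw [this, zero_mul]
        have := congrArg (coeff i) hdiff
        rw [hz, map_sub] at this
        linear_combination this
      have hfs : coeff (n + 1) fS =
          coeff (n + 1) (Pseq n) +
            coeff (n + 1) (fS * invOfUnit (Pseq n) 1) := by
        have hfactor : fS = (fS * invOfUnit (Pseq n) 1) * Pseq n := by
          calc fS = fS * (Pseq n * invOfUnit (Pseq n) 1) := by
                rw [mul_inv_one (constantCoeff_Pseq n), mul_one]
          _ = (fS * invOfUnit (Pseq n) 1) * Pseq n := by ring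
        conv_lhs => rw [hfactor]
        rw [coeff_mul, Finset.Nat.sum_antidiagonal_eq_sum_range_succ_mk]
        have hterm : ∀ i ∈ Finset.range (n + 2),
            coeff i (fS * invOfUnit (Pseq n) 1) * coeff (n + 1 - i) (Pseq n) =
              (if i = 0 then coeff (n + 1) (Pseq n) else 0) +
                (if i = n + 1 then coeff (n + 1) (fS * invOfUnit (Pseq n) 1) else 0) := by
          intro i hi
          rw [Finset.mem_range] at hi
          rcases eq_or_ne i 0 with rfl | hi0
          · rw [hq 0 (by omega), coeff_one, if_pos rfl, if_pos rfl, if_neg (by omega)]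
            simp
          · rcases eq_or_ne i (n + 1) with rfl | hin
            · rw [if_neg hi0, if_pos rfl]
              have : n + 1 - (n + 1) = 0 := by omega
              rw [this, coeff_zero_eq_constantCoeff, constantCoeff_Pseq, mul_one, zero_add]
            · rw [hq i (by omega), coeff_one, if_neg hi0, if_neg hi0, if_neg hin]
              simp
        rw [Finset.sum_congr rfl hterm, Finset.sum_add_distrib,
          Finset.sum_ite_eq' (Finset.range (n + 2)) 0, Finset.sum_ite_eq' (Finset.range (n + 2)) (n + 1)]
        simp
      rw [Pseq_succ, coeff_mul_Efac (by omega) _ _ (le_refl (n + 1)), if_pos rfl,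
        constantCoeff_Pseq, mul_one, hfs]
      show _ = _ + (-bS (n+1))
      rw [bS]
      ring

lemma gh_fS_coeff (n : ℕ) (hn : 1 ≤ n) :
    coeff n (gh Spoly fS) =
      -((MvPolynomial.X 0 : Spoly) ^ n + MvPolynomial.X 1 ^ n) := by
  rw [fS, gh_mul (constantCoeff_Efac 1 _) (constantCoeff_Efac 1 _), map_add,
    coeff_gh_Efac 1 one_ne_zero, coeff_gh_Efac 1 one_ne_zero,
    if_pos ⟨one_dvd n, by omega⟩, if_pos ⟨one_dvd n, by omega⟩]
  rw [Nat.div_one]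
  push_cast
  ring

lemma gh_Pseq_coeff (N n : ℕ) (hn : 1 ≤ n) (hnN : n ≤ N) :
    coeff n (gh Spoly (Pseq N)) =
      -∑ d ∈ Nat.divisors n, (d : Spoly) * bS d ^ (n / d) := by
  rw [Pseq_eq_prod, gh_prod _ _ fun d _ => constantCoeff_Efac d _, map_sum]
  have hterm : ∀ d ∈ Finset.Icc 1 N,
      coeff n (gh Spoly (Efac Spoly d (bS d))) =
        if d ∈ Nat.divisors n then -((d : Spoly) * bS d ^ (n / d)) else 0 := by
    intro d hd
    rw [Finset.mem_Icc] at hd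
    rw [coeff_gh_Efac d (by omega)]
    simp only [Nat.mem_divisors]
  rw [Finset.sum_congr rfl hterm, ← Finset.sum_filter]
  rw [← Finset.sum_neg_distrib]
  congr 1
  ext d
  simp only [Finset.mem_filter, Finset.mem_Icc, Nat.mem_divisors]
  constructor
  · tauto
  · rintro ⟨h1, h2⟩
    have : 1 ≤ d := Nat.pos_of_dvd_of_pos h1 (by omega)
    have : d ≤ n := Nat.le_of_dvd (by omega) h1
    exact ⟨⟨by omega, by omega⟩, h1, h2⟩

theorem bS_relation (n : ℕ) (hn : 1 ≤ n) :
    (MvPolynomial.X 0 : Spoly) ^ n + MvPolynomial.X 1 ^ n =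
      ∑ d ∈ Nat.divisors n, (d : Spoly) * bS d ^ (n / d) := by
  have h := coeff_determines_ghost constantCoeff_fS (constantCoeff_Pseq n) n
    (approx n) n le_rfl
  rw [gh_fS_coeff n hn, gh_Pseq_coeff n n hn le_rfl] at h
  exact neg_injective h

lemma gh_def (f : PowerSeries A) :
    gh A f = (mk fun m => (m : A) * coeff m f) * invOfUnit f 1 := rfl

lemma main_ghost
    (hcan : ∀ n : ℕ, n ≠ 0 → ∀ x y : A, (n : A) * x = (n : A) * y → x = y)
    (u v : A) (a : PowerSeries A) (ha : constantCoeff a = 1)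
    (G : ℕ → PowerSeries A)
    (hG1 : ∀ n, constantCoeff (G n) = 1)
    (hGghost : ∀ n r', coeff r' (gh A (G n)) = coeff (n * r') (gh A a))
    (c : ℕ → A)
    (hc : ∀ i, 1 ≤ i → u ^ i + v ^ i = ∑ d ∈ Nat.divisors i, (d : A) * c d ^ (i / d))
    (N j : ℕ) (hj : j ≤ N) :
    coeff j (rescale u a * rescale v a) =
      coeff j (∏ n ∈ Finset.Icc 1 N, Vop A n (rescale (c n) (G n))) := by
  have cfL : constantCoeff (rescale u a * rescale v a) = 1 := by
    rw [map_mul, constantCoeff_rescale', constantCoeff_rescale', ha, mul_one]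
  have cfFac : ∀ n ∈ Finset.Icc 1 N,
      constantCoeff (Vop A n (rescale (c n) (G n))) = 1 := by
    intro n _
    rw [constantCoeff_Vop, constantCoeff_rescale', hG1]
  have cfR : constantCoeff (∏ n ∈ Finset.Icc 1 N, Vop A n (rescale (c n) (G n))) = 1 := by
    rw [map_prod]
    exact Finset.prod_eq_one cfFac
  refine ghost_determines hcan cfL cfR N ?_ j hj
  intro i hi
  have hLg : coeff i (gh A (rescale u a * rescale v a)) =
      (u ^ i + v ^ i) * coeff i (gh A a) := by
    rw [gh_mul (by rw [constantCoeff_rescale', ha]) (by rw [constantCoeff_rescale', ha]),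
      map_add, gh_rescale u ha, gh_rescale v ha, coeff_rescale, coeff_rescale]
    ring
  have hRg : coeff i (gh A (∏ n ∈ Finset.Icc 1 N, Vop A n (rescale (c n) (G n)))) =
      ∑ n ∈ Finset.Icc 1 N,
        (if n ∣ i then (n : A) * c n ^ (i / n) * coeff i (gh A a) else 0) := by
    rw [gh_prod _ _ cfFac, map_sum]
    refine Finset.sum_congr rfl fun n hn => ?_
    rw [Finset.mem_Icc] at hn
    rw [gh_Vop n (by omega) (by rw [constantCoeff_rescale', hG1]), coeff_C_mul, coeff_Vop]
    by_cases hd : n ∣ i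
    · rw [if_pos hd, if_pos hd, gh_rescale _ (hG1 n), coeff_rescale, hGghost n (i / n),
        Nat.mul_div_cancel' hd]
      ring
    · rw [if_neg hd, if_neg hd, mul_zero]
  rw [hLg, hRg]
  rcases Nat.eq_zero_or_pos i with rfl | hi1
  · rw [coeff_zero_gh, mul_zero]
    symm
    refine Finset.sum_eq_zero fun n _ => ?_
    simp
  · rw [← Finset.sum_filter]
    have hset : (Finset.Icc 1 N).filter (· ∣ i) = Nat.divisors i := by
      ext d
      simp only [Finset.mem_filter, Finset.mem_Icc, Nat.mem_divisors]
      constructor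
      · rintro ⟨⟨hd1, hdN⟩, hdi⟩
        exact ⟨hdi, by omega⟩
      · rintro ⟨hdi, hi0⟩
        have h1 : 1 ≤ d := Nat.pos_of_dvd_of_pos hdi hi1
        have h2 : d ≤ i := Nat.le_of_dvd hi1 hdi
        exact ⟨⟨h1, by omega⟩, hdi⟩
    rw [hset, ← Finset.sum_mul, ← hc i hi1]

lemma map_Vop {B : Type} [CommRing B] (φ : A →+* B) (k : ℕ) (f : PowerSeries A) :
    PowerSeries.map φ (Vop A k f) = Vop B k (PowerSeries.map φ f) := by
  ext r
  rw [coeff_map, coeff_Vop, coeff_Vop, coeff_map, apply_ite φ, map_zero]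

lemma map_rescale' {B : Type} [CommRing B] (φ : A →+* B) (c : A) (f : PowerSeries A) :
    PowerSeries.map φ (rescale c f) = rescale (φ c) (PowerSeries.map φ f) := by
  ext n
  rw [coeff_map, coeff_rescale, coeff_rescale, coeff_map, map_mul, map_pow]

lemma relation_unique (r r' : ℕ → Spoly) (h0 : r 0 = 0) (h0' : r' 0 = 0)
    (hrel : ∀ n : ℕ, 1 ≤ n →
      (MvPolynomial.X 0 : Spoly) ^ n + MvPolynomial.X 1 ^ n =
        ∑ d ∈ Nat.divisors n, (d : Spoly) * r d ^ (n / d))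
    (hrel' : ∀ n : ℕ, 1 ≤ n →
      (MvPolynomial.X 0 : Spoly) ^ n + MvPolynomial.X 1 ^ n =
        ∑ d ∈ Nat.divisors n, (d : Spoly) * r' d ^ (n / d)) :
    r = r' := by
  funext n
  induction n using Nat.strong_induction_on with
  | _ n ih =>
    rcases Nat.eq_zero_or_pos n with rfl | hn
    · rw [h0, h0']
    · have h1 := (hrel n hn).symm.trans (hrel' n hn)
      have hmem : n ∈ Nat.divisors n := Nat.mem_divisors_self n hn.ne'
      rw [← Finset.add_sum_erase _ _ hmem, ← Finset.add_sum_erase _ _ hmem] at h1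
      have hsum : ∑ d ∈ (Nat.divisors n).erase n, (d : Spoly) * r d ^ (n / d) =
          ∑ d ∈ (Nat.divisors n).erase n, (d : Spoly) * r' d ^ (n / d) := by
        refine Finset.sum_congr rfl fun d hd => ?_
        rw [Finset.mem_erase, Nat.mem_divisors] at hd
        have hdn : d < n := lt_of_le_of_ne (Nat.le_of_dvd hn hd.2.1) hd.1
        rw [ih d hdn]
      rw [hsum] at h1
      have h2 : (n : Spoly) * r n ^ (n / n) = (n : Spoly) * r' n ^ (n / n) := by
        exact add_right_cancel h1
      rw [Nat.div_self hn, pow_one, pow_one] at h2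
      exact mul_left_cancel₀ (Nat.cast_ne_zero.2 hn.ne') h2

abbrev Tpoly : Type := MvPolynomial (ℕ ⊕ Fin 2) ℤ

noncomputable def aT : PowerSeries Tpoly :=
  PowerSeries.mk fun i => if i = 0 then 1 else MvPolynomial.X (Sum.inl i)

noncomputable def uT : Tpoly := MvPolynomial.X (Sum.inr 0)
noncomputable def vT : Tpoly := MvPolynomial.X (Sum.inr 1)

lemma constantCoeff_aT : constantCoeff aT = 1 := by
  rw [← coeff_zero_eq_constantCoeff_apply, aT, coeff_mk, if_pos rfl]

/-- Sum of homothety operators / Teichmüller addition.  There are unique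
integer-coefficient polynomials `r_d(X,Y)` (`d ≥ 1`, normalized by `r_0 = 0`) with
`X^n + Y^n = Σ_{d∣n} d · r_d(X,Y)^{n/d}` for all `n ≥ 1`; they satisfy
`r_1 = X + Y`, `r_2 = -XY`, and for the homothety operators `⟨u⟩a(t) = a(ut)` on `Λ(A)`
one has `⟨u⟩ + ⟨v⟩ = Σ_{n≥1} V_n ⟨r_n(u,v)⟩ f_n` as additive operations (stated
coefficientwise, with the infinite Witt sum truncated at level `N`).  Here `F` is the
Frobenius family, functorial, additive, preserving constant term 1, and characterized on
ghost components by `s_r(f_n a) = s_{nr}(a)`. -/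
theorem stmt19
    (F : ∀ (A : Type) [CommRing A], ℕ → PowerSeries A → PowerSeries A)
    (hF1 : ∀ (A : Type) [CommRing A] (n : ℕ) (f : PowerSeries A),
      PowerSeries.constantCoeff f = 1 → PowerSeries.constantCoeff (F A n f) = 1)
    (hFadd : ∀ (A : Type) [CommRing A] (n : ℕ) (f g : PowerSeries A),
      PowerSeries.constantCoeff f = 1 → PowerSeries.constantCoeff g = 1 →
      F A n (f * g) = F A n f * F A n g)
    (hFfunc : ∀ (A B : Type) [CommRing A] [CommRing B] (φ : A →+* B) (n : ℕ)
      (f : PowerSeries A),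
      PowerSeries.map φ (F A n f) = F B n (PowerSeries.map φ f))
    (hFghost : ∀ (A : Type) [CommRing A] (n : ℕ) (f : PowerSeries A),
      PowerSeries.constantCoeff f = 1 → ∀ r : ℕ,
        PowerSeries.coeff r
            ((PowerSeries.mk fun m => (m : A) * PowerSeries.coeff m (F A n f)) *
              PowerSeries.invOfUnit (F A n f) 1) =
          PowerSeries.coeff (n * r)
            ((PowerSeries.mk fun m => (m : A) * PowerSeries.coeff m f) *
              PowerSeries.invOfUnit f 1)) :
    (∃! r : ℕ → MvPolynomial (Fin 2) ℤ,
      r 0 = 0 ∧ ∀ n : ℕ, 1 ≤ n →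
        (MvPolynomial.X 0 : MvPolynomial (Fin 2) ℤ) ^ n + MvPolynomial.X 1 ^ n =
          ∑ d ∈ Nat.divisors n, (d : MvPolynomial (Fin 2) ℤ) * r d ^ (n / d)) ∧
    ∀ r : ℕ → MvPolynomial (Fin 2) ℤ,
      (r 0 = 0 ∧ ∀ n : ℕ, 1 ≤ n →
        (MvPolynomial.X 0 : MvPolynomial (Fin 2) ℤ) ^ n + MvPolynomial.X 1 ^ n =
          ∑ d ∈ Nat.divisors n, (d : MvPolynomial (Fin 2) ℤ) * r d ^ (n / d)) →
      r 1 = MvPolynomial.X 0 + MvPolynomial.X 1 ∧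
      r 2 = -(MvPolynomial.X 0 * MvPolynomial.X 1) ∧
      ∀ (A : Type) [CommRing A] (u v : A) (a : PowerSeries A),
        PowerSeries.constantCoeff a = 1 →
        ∀ N j : ℕ, j ≤ N →
          PowerSeries.coeff j
              (PowerSeries.rescale u a * PowerSeries.rescale v a) =
            PowerSeries.coeff j
              (∏ n ∈ Finset.Icc 1 N,
                Vop A n (PowerSeries.rescale
                  (MvPolynomial.aeval ![u, v] (r n)) (F A n a))) := by
  constructor
  · exact ⟨bS, ⟨rfl, bS_relation⟩,
      fun r' hr' => relation_unique r' bS hr'.1 rfl hr'.2 bS_relation⟩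
  · rintro r ⟨h0, hrel⟩
    have hr1 : r 1 = MvPolynomial.X 0 + MvPolynomial.X 1 := by
      have h1 := hrel 1 le_rfl
      rw [Nat.divisors_one, Finset.sum_singleton] at h1
      simpa using h1.symm
    have hr2 : r 2 = -(MvPolynomial.X 0 * MvPolynomial.X 1) := by
      have h2 := hrel 2 (by omega)
      rw [Nat.prime_two.divisors, Finset.sum_pair (by omega : (1 : ℕ) ≠ 2)] at h2
      have e1 : (2 : ℕ) / 1 = 2 := rfl
      have e2 : (2 : ℕ) / 2 = 1 := rfl
      rw [e1, e2, hr1, pow_one] at h2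
      push_cast at h2
      refine mul_left_cancel₀ (by norm_num : (2 : MvPolynomial (Fin 2) ℤ) ≠ 0) ?_
      linear_combination -h2
    refine ⟨hr1, hr2, ?_⟩
    intro A _ u v a ha N j hjN
    have hcanT : ∀ n : ℕ, n ≠ 0 → ∀ x y : Tpoly, (n : Tpoly) * x = (n : Tpoly) * y → x = y :=
      fun n hn x y h => mul_left_cancel₀ (Nat.cast_ne_zero.2 hn) h
    have key := main_ghost hcanT uT vT aT constantCoeff_aT
      (fun n => F Tpoly n aT)
      (fun n => hF1 Tpoly n aT constantCoeff_aT)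
      (fun n r' => by
        rw [gh_def, gh_def]
        exact hFghost Tpoly n aT constantCoeff_aT r')
      (fun n => MvPolynomial.aeval ![uT, vT] (r n))
      (fun i hi => by
        have h := congrArg (MvPolynomial.aeval (R := ℤ) ![uT, vT]) (hrel i hi)
        simpa only [map_add, map_pow, map_sum, map_mul, map_natCast,
          MvPolynomial.aeval_X, Matrix.cons_val_zero, Matrix.cons_val_one,
          Matrix.head_cons] using h)
      N j hjN
    set φ : Tpoly →+* A :=
      MvPolynomial.eval₂Hom (Int.castRingHom A)
        (Sum.elim (fun i => PowerSeries.coeff i a) ![u, v]) with hφdef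
    have hφu : φ uT = u := by
      rw [hφdef, uT, MvPolynomial.eval₂Hom_X']
      simp
    have hφv : φ vT = v := by
      rw [hφdef, vT, MvPolynomial.eval₂Hom_X']
      simp
    have hφa : PowerSeries.map φ aT = a := by
      ext i
      rw [coeff_map, aT, coeff_mk]
      rcases eq_or_ne i 0 with rfl | hi0
      · rw [if_pos rfl, map_one, coeff_zero_eq_constantCoeff_apply, ha]
      · rw [if_neg hi0, hφdef, MvPolynomial.eval₂Hom_X']
        simp
    have hφr : ∀ p : MvPolynomial (Fin 2) ℤ,
        φ (MvPolynomial.aeval ![uT, vT] p) = MvPolynomial.aeval ![u, v] p := by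
      intro p
      have hcomp : φ.comp (MvPolynomial.aeval (R := ℤ) ![uT, vT]).toRingHom =
          (MvPolynomial.aeval (R := ℤ) ![u, v]).toRingHom := by
        apply MvPolynomial.ringHom_ext
        · intro z
          simp [MvPolynomial.aeval_C]
        · intro i
          fin_cases i <;>
            simp [MvPolynomial.aeval_X, hφu, hφv]
      exact RingHom.congr_fun hcomp p
    calc PowerSeries.coeff j (PowerSeries.rescale u a * PowerSeries.rescale v a)
        = φ (PowerSeries.coeff j (rescale uT aT * rescale vT aT)) := by
          rw [← coeff_map]
          congr 1
          rw [map_mul, map_rescale', map_rescale', hφu, hφv, hφa]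
      _ = φ (PowerSeries.coeff j
            (∏ n ∈ Finset.Icc 1 N,
              Vop Tpoly n (rescale (MvPolynomial.aeval ![uT, vT] (r n)) (F Tpoly n aT)))) := by
          rw [key]
      _ = PowerSeries.coeff j
            (∏ n ∈ Finset.Icc 1 N,
              Vop A n (PowerSeries.rescale (MvPolynomial.aeval ![u, v] (r n)) (F A n a))) := by
          rw [← coeff_map]
          congr 1
          rw [map_prod]
          refine Finset.prod_congr rfl fun n _ => ?_
          rw [map_Vop, map_rescale', hφr, hFfunc Tpoly A φ n aT, hφa]
end
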